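/- arXiv:2309.14197 — 2 statements merged into one kernel-verified Lean document; each statement's English description precedes it below -/
import Mathlib

section
/- Let k ≥ 3 be an integer. (i) If F is a Berge acyclic k-graph with more than k vertices, then m_k(F) ≤ 1/(k−1). (ii) If K ≥ 3 and A is a K-sparse k-uniform absorber whose associated k-graph (the k-graph whose edges are the edges of its paths) has more than k vertices, then m_k of that k-graph is at most 2/(k−1) + 1/(K(k−1)−k). -/
open Finset

attribute [local instance] Classical.propDecidable

/-- A (hyper)graph: a finite vertex set together with a finite set of edges,
each edge being a finite set of vertices. -/
structure HGraph where
  verts : Finset ℕ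
  edges : Finset (Finset ℕ)

namespace HGraph

/-- `G` is a `k`-graph: every edge is a `k`-element subset of the vertex set. -/
def IsUniform (G : HGraph) (k : ℕ) : Prop :=
  ∀ e ∈ G.edges, e ⊆ G.verts ∧ e.card = k

/-- The degree of a vertex set `S`: the number of edges containing `S`. -/
def deg (G : HGraph) (S : Finset ℕ) : ℕ :=
  (G.edges.filter fun e => S ⊆ e).card

/-- `δ_d(G) ≥ m`: every `d`-element subset of the vertices has degree at least `m`. -/
def MinDegAtLeast (G : HGraph) (d : ℕ) (m : ℝ) : Prop :=
  ∀ S ⊆ G.verts, S.card = d → m ≤ (G.deg S : ℝ)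

/-- The induced subgraph on a vertex set `A`. -/
def induce (G : HGraph) (A : Finset ℕ) : HGraph :=
  ⟨A, G.edges.filter fun e => e ⊆ A⟩

end HGraph

/-! ### Loose paths and loose cycles, encoded by their vertex sequence -/

/-- The `i`-th edge of the loose path with vertex sequence `vs`:
the vertices at positions `i(k-1), …, i(k-1)+k-1`. -/
def pathEdge (k : ℕ) (vs : List ℕ) (i : ℕ) : Finset ℕ :=
  ((List.range k).map fun j => vs.getD (i * (k - 1) + j) 0).toFinset

/-- The number of edges of a loose path on `vs.length` vertices. -/
def numPathEdges (k : ℕ) (vs : List ℕ) : ℕ := (vs.length - 1) / (k - 1)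

/-- `vs` is the vertex sequence of an (abstract) loose path: distinct vertices,
and the number of vertices is `≡ 1 (mod k-1)` and at least `k` (at least one edge). -/
def IsLoosePathList (k : ℕ) (vs : List ℕ) : Prop :=
  vs.Nodup ∧ k ≤ vs.length ∧ (k - 1) ∣ (vs.length - 1)

/-- The edges of the loose path with vertex sequence `vs`. -/
def pathEdges (k : ℕ) (vs : List ℕ) : Finset (Finset ℕ) :=
  ((List.range (numPathEdges k vs)).map (pathEdge k vs)).toFinset

/-- `vs` is the vertex sequence of a loose path in `G`. -/
def HGraph.IsLoosePath (G : HGraph) (k : ℕ) (vs : List ℕ) : Prop :=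
  IsLoosePathList k vs ∧ ∀ i < numPathEdges k vs, pathEdge k vs i ∈ G.edges

/-- `vs` is the vertex sequence of a loose `(u,v)`-path in `G`:
`u` is its first vertex and `v` its last vertex. -/
def HGraph.IsLooseUVPath (G : HGraph) (k : ℕ) (u v : ℕ) (vs : List ℕ) : Prop :=
  G.IsLoosePath k vs ∧ vs.head? = some u ∧ vs.getLast? = some v

/-- The `i`-th edge of the loose cycle with cyclic vertex sequence `vs`. -/
def cycleEdge (k : ℕ) (vs : List ℕ) (i : ℕ) : Finset ℕ :=
  ((List.range k).map fun j => vs.getD ((i * (k - 1) + j) % vs.length) 0).toFinset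

/-- `vs` is the cyclic vertex sequence of an (abstract) loose cycle. -/
def IsLooseCycleList (k : ℕ) (vs : List ℕ) : Prop :=
  vs.Nodup ∧ 3 * (k - 1) ≤ vs.length ∧ (k - 1) ∣ vs.length

/-- The edges of the loose cycle with cyclic vertex sequence `vs`. -/
def cycleEdges (k : ℕ) (vs : List ℕ) : Finset (Finset ℕ) :=
  ((List.range (vs.length / (k - 1))).map (cycleEdge k vs)).toFinset

/-- `vs` is the cyclic vertex sequence of a loose cycle in `G`. -/
def HGraph.IsLooseCycle (G : HGraph) (k : ℕ) (vs : List ℕ) : Prop :=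
  IsLooseCycleList k vs ∧ ∀ i < vs.length / (k - 1), cycleEdge k vs i ∈ G.edges

/-- `G` contains a loose Hamilton cycle. -/
def HGraph.HasLooseHamCycle (G : HGraph) (k : ℕ) : Prop :=
  ∃ vs : List ℕ, G.IsLooseCycle k vs ∧ vs.toFinset = G.verts

/-! ### The minimum-degree threshold `μ_d(k)` -/

/-- `μ` is large enough (as a minimum relative `d`-degree) to force loose Hamilton cycles. -/
def LooseHamProperty (k d : ℕ) (μ : ℝ) : Prop :=
  ∀ γ : ℝ, 0 < γ → ∃ n₀ : ℕ, ∀ n : ℕ, n₀ ≤ n → (k - 1) ∣ n →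
    ∀ G : HGraph, G.IsUniform k → G.verts.card = n →
      G.MinDegAtLeast d ((μ + γ) * ((n - d).choose (k - d) : ℝ)) →
      G.HasLooseHamCycle k

/-- The minimum `d`-degree threshold for loose Hamilton cycles. -/
noncomputable def muD (k d : ℕ) : ℝ :=
  sInf {μ : ℝ | μ ∈ Set.Icc (0 : ℝ) 1 ∧ LooseHamProperty k d μ}

/-! ### The binomial random `k`-graph -/

/-- All `k`-element subsets of `{0, …, n-1}`. -/
def kSets (n k : ℕ) : Finset (Finset ℕ) := (Finset.range n).powersetCard k

/-- The probability that `H_k(n,p)` (with vertex set `{0,…,n-1}`) has edge set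
satisfying the property `P`. -/
noncomputable def probRandom (n k : ℕ) (p : ℝ) (P : Finset (Finset ℕ) → Prop) : ℝ :=
  ∑ E ∈ (kSets n k).powerset,
    if P E then p ^ E.card * (1 - p) ^ ((kSets n k).card - E.card) else 0

/-- The `k`-graph on `{0,…,n-1}` with edge set `E`. -/
def graphOfEdges (n : ℕ) (E : Finset (Finset ℕ)) : HGraph :=
  ⟨Finset.range n, E⟩

/-- The probability that a uniformly random `m`-element subset of `U` satisfies `P`. -/
noncomputable def fracSubsets (U : Finset ℕ) (m : ℕ) (P : Finset ℕ → Prop) : ℝ :=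
  (((U.powersetCard m).filter P).card : ℝ) / ((U.powersetCard m).card : ℝ)

/-! ### Berge cycles and girth -/

/-- `es` is a Berge cycle in the hypergraph with edge set `H`: a sequence of at least two
distinct edges `e_0, …, e_{ℓ-1}` of `H` together with distinct vertices `v_0, …, v_{ℓ-1}`
such that `v_i ∈ e_i ∩ e_{i+1}` (indices mod `ℓ`). -/
def IsBergeCycleIn (H : Finset (Finset ℕ)) (es : List (Finset ℕ)) : Prop :=
  2 ≤ es.length ∧ es.Nodup ∧ (∀ e ∈ es, e ∈ H) ∧
  ∃ vs : List ℕ, vs.Nodup ∧ vs.length = es.length ∧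
    ∀ i < es.length,
      vs.getD i 0 ∈ es.getD i ∅ ∧ vs.getD i 0 ∈ es.getD ((i + 1) % es.length) ∅

/-- The hypergraph with edge set `H` has girth at least `K`. -/
def GirthAtLeast (H : Finset (Finset ℕ)) (K : ℕ) : Prop :=
  ∀ es : List (Finset ℕ), IsBergeCycleIn H es → K ≤ es.length

/-- The hypergraph with edge set `H` is Berge acyclic. -/
def BergeAcyclic (H : Finset (Finset ℕ)) : Prop :=
  ∀ es : List (Finset ℕ), ¬ IsBergeCycleIn H es

/-! ### Absorbers -/

/-- An absorber in `G` rooted in the `(k-1)`-set `X`: a collection of loose paths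
`P₁ j, P₂ j` (`j < q`) such that for each `i ∈ {1,2}` the paths `Pᵢ j` are pairwise
vertex-disjoint, `V(⋃ P₁ j) = V(⋃ P₂ j) ∪ X`, `X ∩ V(⋃ P₂ j) = ∅`, and `P₁ j` and
`P₂ j` have the same first vertex and the same last vertex. -/
structure Absorber (G : HGraph) (k : ℕ) (X : Finset ℕ) where
  q : ℕ
  P₁ : Fin q → List ℕ
  P₂ : Fin q → List ℕ
  path₁ : ∀ j, G.IsLoosePath k (P₁ j)
  path₂ : ∀ j, G.IsLoosePath k (P₂ j)
  ends_head : ∀ j, (P₁ j).head? = (P₂ j).head?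
  ends_last : ∀ j, (P₁ j).getLast? = (P₂ j).getLast?
  disj₁ : ∀ j j', j ≠ j' → Disjoint (P₁ j).toFinset (P₁ j').toFinset
  disj₂ : ∀ j j', j ≠ j' → Disjoint (P₂ j).toFinset (P₂ j').toFinset
  cover : (Finset.univ.biUnion fun j => (P₁ j).toFinset) =
      (Finset.univ.biUnion fun j => (P₂ j).toFinset) ∪ X
  avoid : Disjoint X (Finset.univ.biUnion fun j => (P₂ j).toFinset)

namespace Absorber

variable {G : HGraph} {k : ℕ} {X : Finset ℕ}

/-- The vertex set of an absorber (the vertices of its passive state). -/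
def verts (A : Absorber G k X) : Finset ℕ :=
  Finset.univ.biUnion fun j => (A.P₂ j).toFinset

/-- The order of an absorber. -/
def order (A : Absorber G k X) : ℕ := A.verts.card

/-- The set of all edges of the paths of an absorber. -/
def edgeSet (A : Absorber G k X) : Finset (Finset ℕ) :=
  (Finset.univ.biUnion fun j => pathEdges k (A.P₁ j)) ∪
    (Finset.univ.biUnion fun j => pathEdges k (A.P₂ j))

/-- The `k`-graph associated to an absorber: its edges are the edges of its paths. -/
def graph (A : Absorber G k X) : HGraph := ⟨A.verts ∪ X, A.edgeSet⟩

/-- An absorber is `K`-sparse if the hypergraph formed by the edges of its paths,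
together with `X` as an additional edge, has girth at least `K`. -/
def KSparse (A : Absorber G k X) (K : ℕ) : Prop :=
  GirthAtLeast (insert X A.edgeSet) K

end Absorber

/-! ### `k`-density -/

/-- `m_k(H) ≤ c`: every subgraph `H'` of `H` with more than `k` vertices satisfies
`(e(H') - 1)/(v(H') - k) ≤ c`. -/
def kDensityLE (H : HGraph) (k : ℕ) (c : ℝ) : Prop :=
  ∀ V' ⊆ H.verts, ∀ E' ⊆ H.edges, (∀ e ∈ E', e ⊆ V') → k < V'.card →
    ((E'.card : ℝ) - 1) / ((V'.card : ℝ) - (k : ℝ)) ≤ c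

/-! ### Rooted copies and blow-ups -/

/-- `G` contains a copy of `R` rooted in `X ⊆ V(R)`. -/
def ContainsRootedCopy (G R : HGraph) (X : Finset ℕ) : Prop :=
  ∃ φ : ℕ → ℕ, Set.InjOn φ (R.verts : Set ℕ) ∧ (∀ x ∈ X, φ x = x) ∧
    (∀ v ∈ R.verts, φ v ∈ G.verts) ∧ (∀ e ∈ R.edges, e.image φ ∈ G.edges)

/-- `H` is (a copy of) the blow-up `R*(m, X)`: each vertex of `R` outside `X` is
replaced by `m` copies, the vertices of `X` are kept, and each edge of `R` is replaced
by the corresponding complete `k`-partite `k`-graph. The map `f` projects `H` to `R`. -/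
def IsBlowup (k : ℕ) (R : HGraph) (X : Finset ℕ) (m : ℕ) (H : HGraph) : Prop :=
  ∃ f : ℕ → ℕ,
    (∀ x ∈ X, (H.verts.filter fun v => f v = x) = {x}) ∧
    (∀ u ∈ R.verts \ X, (H.verts.filter fun v => f v = u).card = m) ∧
    (∀ v ∈ H.verts, f v ∈ R.verts) ∧
    H.edges = (H.verts.powersetCard k).filter fun e => e.image f ∈ R.edges

/-! ### Spread sets and degree-2 vertices in loose cycles -/

/-- The cyclic distance between positions `i` and `j` on a cycle of length `ℓ`. -/
def cyclicDist (ℓ i j : ℕ) : ℕ := min ((i + ℓ - j) % ℓ) ((j + ℓ - i) % ℓ)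

/-- `X` is `K`-spread in the loose cycle with cyclic vertex sequence `vs`: any two
distinct vertices of `X` are at least `K` vertices apart in the cyclic ordering. -/
def KSpread (vs : List ℕ) (X : Finset ℕ) (K : ℕ) : Prop :=
  ∀ i < vs.length, ∀ j < vs.length, i ≠ j →
    vs.getD i 0 ∈ X → vs.getD j 0 ∈ X → K ≤ cyclicDist vs.length i j

/-- `x` has degree `2` in the loose cycle with cyclic vertex sequence `vs`, i.e. `x`
sits at a position divisible by `k-1` (where two consecutive edges meet). -/
def IsDegTwoVert (k : ℕ) (vs : List ℕ) (x : ℕ) : Prop :=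
  ∃ i, i < vs.length ∧ vs.getD i 0 = x ∧ (k - 1) ∣ i


namespace KDX

lemma getD_lt {α : Type*} (l : List α) (d : α) {i : ℕ} (h : i < l.length) :
    l.getD i d = l[i] := List.getD_eq_getElem l d h

lemma getD_append_lt {α : Type*} (l : List α) (a : α) (d : α) {i : ℕ} (h : i < l.length) :
    (l ++ [a]).getD i d = l.getD i d := by
  rw [getD_lt _ _ (by simp; omega), getD_lt _ _ h, List.getElem_append_left]

lemma getD_append_len {α : Type*} (l : List α) (a : α) (d : α) :
    (l ++ [a]).getD l.length d = a := by
  rw [getD_lt _ _ (by simp)]; simp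

lemma getD_drop {α : Type*} (l : List α) (d : α) (j : ℕ) {i : ℕ} (h : j + i < l.length) :
    (l.drop j).getD i d = l.getD (j + i) d := by
  rw [getD_lt _ _ (by simp; omega), getD_lt _ _ h, List.getElem_drop]

lemma mem_iff_getD {α : Type*} (l : List α) (d : α) (x : α) :
    x ∈ l ↔ ∃ i, i < l.length ∧ l.getD i d = x := by
  constructor
  · intro h
    obtain ⟨i, hi, he⟩ := List.getElem_of_mem h
    exact ⟨i, hi, by rw [getD_lt _ _ hi, he]⟩
  · rintro ⟨i, hi, rfl⟩
    rw [getD_lt _ _ hi]; exact List.getElem_mem hi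

lemma bergeCycle_mono {H H' : Finset (Finset ℕ)} (h : H ⊆ H') {es : List (Finset ℕ)}
    (hc : IsBergeCycleIn H es) : IsBergeCycleIn H' es :=
  ⟨hc.1, hc.2.1, fun e he => h (hc.2.2.1 e he), hc.2.2.2⟩

lemma bergeAcyclic_mono {H H' : Finset (Finset ℕ)} (h : H ⊆ H') (hac : BergeAcyclic H') :
    BergeAcyclic H := fun es hc => hac es (bergeCycle_mono h hc)

lemma pair_inter_le_one {H : Finset (Finset ℕ)} {K : ℕ} (hK : 3 ≤ K) (hg : GirthAtLeast H K)
    {e f : Finset ℕ} (he : e ∈ H) (hf : f ∈ H) (hef : e ≠ f) : (e ∩ f).card ≤ 1 := by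
  by_contra h
  push_neg at h
  obtain ⟨u, hu, v, hv, huv⟩ := Finset.one_lt_card.mp h
  simp only [Finset.mem_inter] at hu hv
  have hcyc : IsBergeCycleIn H [e, f] := by
    refine ⟨by simp, by simp [hef], by simp [he, hf], [u, v], by simp [huv], by simp, ?_⟩
    intro i hi
    simp only [List.length_cons, List.length_nil] at hi
    interval_cases i <;> simp [hu.1, hu.2, hv.1, hv.2]
  have := hg _ hcyc
  simp at this; omega

/-- A Berge path: `es` distinct edges of `H`, `vs` distinct vertices,
`vs[i] ∈ es[i] ∩ es[i+1]`. -/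
def IsBPath (H : Finset (Finset ℕ)) (es : List (Finset ℕ)) (vs : List ℕ) : Prop :=
  es.Nodup ∧ (∀ e ∈ es, e ∈ H) ∧ vs.Nodup ∧ vs.length + 1 = es.length ∧
  ∀ i < vs.length, vs.getD i 0 ∈ es.getD i ∅ ∧ vs.getD i 0 ∈ es.getD (i + 1) ∅

lemma bpath_cycle {H : Finset (Finset ℕ)} {es : List (Finset ℕ)} {vs : List ℕ}
    (hp : IsBPath H es vs) {s : ℕ} {u : ℕ} (hs : s + 2 ≤ es.length)
    (hu1 : u ∈ es.getD s ∅) (hu2 : u ∈ es.getD (es.length - 1) ∅)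
    (hu3 : u ∉ vs.drop s) : IsBergeCycleIn H (es.drop s) := by
  obtain ⟨hnd, hmem, hvnd, hlen, hprop⟩ := hp
  set t := es.length with ht
  have hlc : (es.drop s).length = t - s := by simp [ht]
  refine ⟨by omega, hnd.sublist (List.drop_sublist _ _), fun e he => hmem e (List.mem_of_mem_drop he), vs.drop s ++ [u], ?_, ?_, ?_⟩
  · simp only [List.nodup_append, List.nodup_cons, List.nodup_nil]
    refine ⟨hvnd.sublist (List.drop_sublist _ _), ?_⟩
    refine ⟨by simp, ?_⟩
    intro a ha b hb hab; apply hu3; simp at hb; rw [← hb, ← hab]; exact ha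
  · simp; omega
  · intro i hi
    rw [hlc] at hi
    by_cases hil : i < t - s - 1
    · have h1 : (vs.drop s ++ [u]).getD i 0 = vs.getD (s + i) 0 := by
        rw [getD_append_lt _ _ _ (by simp; omega), getD_drop _ _ _ (by omega)]
      have h2 : (es.drop s).getD i ∅ = es.getD (s + i) ∅ := getD_drop _ _ _ (by omega)
      have h3 : (es.drop s).getD ((i+1) % (es.drop s).length) ∅ = es.getD (s + i + 1) ∅ := by
        rw [hlc, Nat.mod_eq_of_lt (by omega), getD_drop _ _ _ (by omega)]
        ring_nf
      rw [h1, h2, h3]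
      have := hprop (s + i) (by omega)
      exact ⟨this.1, by convert this.2 using 3 <;> omega⟩
    · have hieq : i = t - s - 1 := by omega
      have h1 : (vs.drop s ++ [u]).getD i 0 = u := by
        have : i = (vs.drop s).length := by simp; omega
        rw [this, getD_append_len]
      have h2 : (es.drop s).getD i ∅ = es.getD (t - 1) ∅ := by
        rw [getD_drop _ _ _ (by omega)]
        congr 1; omega
      have h3 : (es.drop s).getD ((i+1) % (es.drop s).length) ∅ = es.getD s ∅ := by
        rw [hlc, hieq]
        have : (t - s - 1 + 1) % (t - s) = 0 := by
          rw [Nat.sub_add_cancel (by omega)]; simp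
        rw [this, getD_drop _ _ _ (by omega)]
        simp
      rw [h1, h2, h3]
      exact ⟨hu2, hu1⟩

lemma nodup_length_le {H : Finset (Finset ℕ)} {es : List (Finset ℕ)}
    (hnd : es.Nodup) (hmem : ∀ e ∈ es, e ∈ H) : es.length ≤ H.card := by
  classical
  rw [← List.toFinset_card_of_nodup hnd]
  exact Finset.card_le_card (fun e he => hmem e (List.mem_toFinset.mp he))

lemma exists_leaf {H : Finset (Finset ℕ)} (hne : H.Nonempty) (hac : BergeAcyclic H) :
    ∃ e ∈ H, (e ∩ (H.erase e).biUnion id).card ≤ 1 := by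
  classical
  set P : ℕ → Prop := fun n => ∃ es vs, IsBPath H es vs ∧ es.length = n with hP
  obtain ⟨e₀, he₀⟩ := hne
  have hP1 : P 1 := by
    refine ⟨[e₀], [], ⟨by simp, by simp [he₀], by simp, by simp, by simp⟩, by simp⟩
  have hbd : ∀ n, P n → n ≤ H.card := by
    rintro n ⟨es, vs, ⟨hnd, hmem, -⟩, rfl⟩
    exact nodup_length_le hnd hmem
  set t := Nat.findGreatest P H.card with htdef
  have hPt : P t := Nat.findGreatest_spec (P := P) (hbd 1 hP1) hP1
  have ht1 : 1 ≤ t := Nat.le_findGreatest (hbd 1 hP1) hP1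
  have hmax : ¬ P (t + 1) := by
    intro hcon
    have h1 := Nat.le_findGreatest (hbd _ hcon) hcon
    omega
  obtain ⟨es, vs, hpath, hlen⟩ := hPt
  set e := es.getD (t - 1) ∅ with hedef
  have hte : t - 1 < es.length := by omega
  have heH : e ∈ H := hpath.2.1 _ (by rw [hedef, getD_lt _ _ hte]; exact List.getElem_mem hte)
  refine ⟨e, heH, ?_⟩
  by_contra hbig
  push_neg at hbig
  set S := e ∩ (H.erase e).biUnion id with hSdef
  set vlast := vs.getD (t - 2) 0 with hvl
  have hSe : (S.erase vlast).Nonempty := by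
    rw [← Finset.card_pos]
    have := Finset.card_erase_of_mem (s := S) (a := vlast)
    have h2 := Finset.card_erase_le (s := S) (a := vlast)
    have h3 : S.card - 1 ≤ (S.erase vlast).card := Finset.pred_card_le_card_erase
    omega
  obtain ⟨u, hu⟩ := hSe
  have huvl : u ≠ vlast := (Finset.mem_erase.mp hu).1
  have huS : u ∈ S := (Finset.mem_erase.mp hu).2
  have hue : u ∈ e := (Finset.mem_inter.mp huS).1
  obtain ⟨f, hfmem, huf⟩ := Finset.mem_biUnion.mp (Finset.mem_inter.mp huS).2
  have hfH : f ∈ H := Finset.mem_of_mem_erase hfmem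
  have hfe : f ≠ e := Finset.ne_of_mem_erase hfmem
  have hvslen : vs.length = t - 1 := by
    have := hpath.2.2.2.1; omega
  have hue' : u ∈ es.getD (es.length - 1) ∅ := by rw [hlen]; exact hue
  by_cases huvs : u ∈ vs
  · -- u = vs[m], m ≤ t - 3 ; cycle from position m+1
    obtain ⟨m, hm, hmu⟩ := (mem_iff_getD vs 0 u).mp huvs
    have hmne : m ≠ t - 2 := by
      intro h
      exact huvl (by rw [← hmu, h])
    have hm3 : m + 2 < t := by omega
    have hcyc := bpath_cycle hpath (s := m + 1) (u := u) (by omega)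
      (by rw [← hmu]; exact (hpath.2.2.2.2 m (by omega)).2) hue'
      (by
        intro hcon
        obtain ⟨r, hr, hru⟩ := (mem_iff_getD _ 0 u).mp hcon
        have hr' : m + 1 + r < vs.length := by simp at hr; omega
        rw [getD_drop vs 0 (m+1) hr'] at hru
        rw [getD_lt _ _ hr'] at hru
        rw [getD_lt _ _ hm] at hmu
        have hinj := (List.Nodup.getElem_inj_iff hpath.2.2.1).mp (hru.trans hmu.symm)
        omega)
    exact hac _ hcyc
  · by_cases hfes : f ∈ es
    · obtain ⟨j, hj, hjf⟩ := (mem_iff_getD es ∅ f).mp hfes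
      have hjne : j ≠ t - 1 := by
        intro h; rw [h] at hjf; exact hfe (by rw [← hjf])
      have hcyc := bpath_cycle hpath (s := j) (u := u) (by omega)
        (by rw [hjf]; exact huf) hue'
        (fun hcon => huvs (List.mem_of_mem_drop hcon))
      exact hac _ hcyc
    · -- extend the path: contradiction with maximality
      apply hmax
      refine ⟨es ++ [f], vs ++ [u], ⟨?_, ?_, ?_, ?_, ?_⟩, by simp; omega⟩
      · simp [List.nodup_append, hpath.1, hfes]; intro a ha h; exact hfes (h ▸ ha)
      · intro g hg
        rcases List.mem_append.mp hg with h | h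
        · exact hpath.2.1 g h
        · simp at h; subst h; exact hfH
      · simp [List.nodup_append, hpath.2.2.1, huvs]; intro a ha h; exact huvs (h ▸ ha)
      · simp [hvslen]; omega
      · intro i hi
        simp only [List.length_append, List.length_cons, List.length_nil] at hi
        by_cases hil : i < vs.length
        · rw [getD_append_lt _ _ _ hil, getD_append_lt _ _ _ (by omega)]
          refine ⟨(hpath.2.2.2.2 i hil).1, ?_⟩
          by_cases h2 : i + 1 < es.length
          · rw [getD_append_lt _ _ _ h2]
            exact (hpath.2.2.2.2 i hil).2
          · -- i+1 = es.length impossible since i < vs.length = es.length - 1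
            omega
        · have hieq : i = vs.length := by omega
          rw [hieq, getD_append_len]
          constructor
          · rw [getD_append_lt _ _ _ (by omega)]
            rw [hvslen]
            exact hue
          · have : vs.length + 1 = es.length := hpath.2.2.2.1
            rw [show vs.length + 1 = es.length from this, getD_append_len]
            exact huf
lemma acyclic_union_card {k : ℕ} (hk : 2 ≤ k) :
    ∀ H : Finset (Finset ℕ), (∀ e ∈ H, e.card = k) → BergeAcyclic H → H.Nonempty →
    (k - 1) * H.card + 1 ≤ (H.biUnion id).card := by
  intro H
  induction H using Finset.strongInductionOn with
  | _ H ih =>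
    intro hcard hac hne
    obtain ⟨e, heH, hleaf⟩ := exists_leaf hne hac
    have hsplit : H.biUnion id = e ∪ (H.erase e).biUnion id := by
      conv_lhs => rw [← Finset.insert_erase heH]
      rw [Finset.biUnion_insert]
      rfl
    by_cases hrest : (H.erase e).Nonempty
    · have hih := ih (H.erase e) (Finset.erase_ssubset heH)
        (fun f hf => hcard f (Finset.mem_of_mem_erase hf))
        (bergeAcyclic_mono (Finset.erase_subset _ _) hac) hrest
      have hU : ((H.erase e).biUnion id).card + (k - 1) ≤ (H.biUnion id).card := by
        rw [hsplit, Finset.union_comm]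
        have huni := Finset.card_union_add_card_inter ((H.erase e).biUnion id) e
        have h2 : ((H.erase e).biUnion id ∩ e).card ≤ 1 := by
          rw [Finset.inter_comm]; exact hleaf
        have h3 := hcard e heH
        omega
      have hcardH : H.card = (H.erase e).card + 1 := by
        rw [Finset.card_erase_of_mem heH]
        have := Finset.card_pos.mpr hne
        omega
      calc (k - 1) * H.card + 1 = ((k-1) * (H.erase e).card + 1) + (k - 1) := by
            rw [hcardH]; ring
        _ ≤ ((H.erase e).biUnion id).card + (k - 1) := by omega
        _ ≤ _ := hU
    · have hHe : H = {e} := by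
        rw [Finset.not_nonempty_iff_eq_empty] at hrest
        apply Finset.eq_singleton_iff_unique_mem.mpr
        refine ⟨heH, fun x hx => ?_⟩
        by_contra hxe
        exact absurd (Finset.mem_erase.mpr ⟨hxe, hx⟩) (by simp [hrest])
      subst hHe
      have hb : ({e} : Finset (Finset ℕ)).biUnion id = e := by simp
      rw [hb, Finset.card_singleton]
      have := hcard e (by simp)
      omega

lemma numPathEdges_mul {k : ℕ} {vs : List ℕ} (h : IsLoosePathList k vs) :
    (k - 1) * numPathEdges k vs = vs.length - 1 := by
  rw [numPathEdges, Nat.mul_div_cancel' h.2.2]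

lemma pathEdge_pos_lt {k : ℕ} {vs : List ℕ} (hk : 2 ≤ k) (h : IsLoosePathList k vs)
    {i j : ℕ} (hi : i < numPathEdges k vs) (hj : j < k) : i * (k - 1) + j < vs.length := by
  have hmul := numPathEdges_mul h
  have hL := h.2.1
  have h1 : (i + 1) * (k - 1) ≤ numPathEdges k vs * (k - 1) := Nat.mul_le_mul_right _ hi
  have h2 : (i + 1) * (k - 1) = i * (k - 1) + (k - 1) := by ring
  have h3 : numPathEdges k vs * (k - 1) = (k - 1) * numPathEdges k vs := by ring
  omega

lemma mem_pathEdge {k : ℕ} {vs : List ℕ} {i : ℕ} {x : ℕ} :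
    x ∈ pathEdge k vs i ↔ ∃ j, j < k ∧ vs.getD (i * (k - 1) + j) 0 = x := by
  simp only [pathEdge, List.mem_toFinset, List.mem_map, List.mem_range]

lemma mem_pathEdges {k : ℕ} {vs : List ℕ} {e : Finset ℕ} :
    e ∈ pathEdges k vs ↔ ∃ i, i < numPathEdges k vs ∧ pathEdge k vs i = e := by
  simp only [pathEdges, List.mem_toFinset, List.mem_map, List.mem_range]

lemma pathEdge_subset {k : ℕ} {vs : List ℕ} (hk : 2 ≤ k) (h : IsLoosePathList k vs)
    {i : ℕ} (hi : i < numPathEdges k vs) : pathEdge k vs i ⊆ vs.toFinset := by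
  intro x hx
  obtain ⟨j, hj, rfl⟩ := mem_pathEdge.mp hx
  have hpos := pathEdge_pos_lt hk h hi hj
  rw [KDX.getD_lt _ _ hpos]
  exact List.mem_toFinset.mpr (List.getElem_mem hpos)

/-- Two edges of a loose path sharing a vertex have adjacent indices, and
the shared vertex is the connector. -/
lemma pathEdge_inter {k : ℕ} {vs : List ℕ} (hk : 2 ≤ k) (h : IsLoosePathList k vs)
    {i i' : ℕ} (hi : i < numPathEdges k vs) (hi' : i' < numPathEdges k vs) (hlt : i < i')
    {x : ℕ} (hx : x ∈ pathEdge k vs i) (hx' : x ∈ pathEdge k vs i') :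
    i' = i + 1 ∧ x = vs.getD (i' * (k - 1)) 0 := by
  obtain ⟨j, hj, hje⟩ := mem_pathEdge.mp hx
  obtain ⟨j', hj', hje'⟩ := mem_pathEdge.mp hx'
  have hp := pathEdge_pos_lt hk h hi hj
  have hp' := pathEdge_pos_lt hk h hi' hj'
  rw [KDX.getD_lt _ _ hp] at hje
  rw [KDX.getD_lt _ _ hp'] at hje'
  have hpos : i * (k - 1) + j = i' * (k - 1) + j' :=
    (List.Nodup.getElem_inj_iff h.1).mp (hje.trans hje'.symm)
  have hii' : i' = i + 1 := by
    by_contra hcon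
    have h2 : i + 2 ≤ i' := by omega
    have h3 : (i + 2) * (k - 1) ≤ i' * (k - 1) := Nat.mul_le_mul_right _ h2
    have h4 : (i + 2) * (k - 1) = i * (k - 1) + (k - 1) + (k - 1) := by ring
    omega
  subst hii'
  have h5 : (i + 1) * (k - 1) = i * (k - 1) + (k - 1) := by ring
  have hj'0 : j' = 0 := by omega
  refine ⟨rfl, ?_⟩
  rw [KDX.getD_lt _ _ (by omega : (i+1) * (k-1) < vs.length), ← hje']
  congr 1
  omega

lemma pathEdge_ne {k : ℕ} {vs : List ℕ} (hk : 2 ≤ k) (h : IsLoosePathList k vs)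
    {i i' : ℕ} (hi : i < numPathEdges k vs) (hi' : i' < numPathEdges k vs) (hne : i ≠ i') :
    pathEdge k vs i ≠ pathEdge k vs i' := by
  wlog hlt : i < i' generalizing i i'
  · exact (this hi' hi hne.symm (by omega)).symm
  intro heq
  -- the top vertex of edge i' is in edge i' but not in edge i
  set x := vs.getD (i' * (k - 1) + (k - 1)) 0 with hxdef
  have hx' : x ∈ pathEdge k vs i' := mem_pathEdge.mpr ⟨k - 1, by omega, rfl⟩
  have hx : x ∈ pathEdge k vs i := heq ▸ hx'
  obtain ⟨-, hcon⟩ := pathEdge_inter hk h hi hi' hlt hx hx'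
  rw [hxdef] at hcon
  have hp1 : i' * (k - 1) + (k - 1) < vs.length := pathEdge_pos_lt hk h hi' (by omega)
  rw [KDX.getD_lt _ _ hp1, KDX.getD_lt _ _ (by omega)] at hcon
  have := (List.Nodup.getElem_inj_iff h.1).mp hcon
  omega

/-- Edge sets contained in a disjoint union of loose paths are Berge acyclic. -/
lemma pathSystem_acyclic {k : ℕ} (hk : 2 ≤ k) {q : ℕ} {P : Fin q → List ℕ}
    (hP : ∀ j, IsLoosePathList k (P j))
    (hdisj : ∀ j j', j ≠ j' → Disjoint (P j).toFinset (P j').toFinset)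
    {F : Finset (Finset ℕ)} (hF : ∀ e ∈ F, ∃ j, e ∈ pathEdges k (P j)) :
    BergeAcyclic F := by
  rintro es ⟨hlen2, hnd, hmem, ws, hwnd, hwlen, hprop⟩
  set ℓ := es.length with hldef
  -- each edge lies in some path
  have hj : ∀ r, r < ℓ → ∃ j, es.getD r ∅ ∈ pathEdges k (P j) := by
    intro r hr
    apply hF
    apply hmem
    rw [KDX.getD_lt _ _ hr]
    exact List.getElem_mem hr
  -- step 1: all edges lie in the path of edge 0
  obtain ⟨j₀, hj₀⟩ := hj 0 (by omega)
  have hsame : ∀ r, r < ℓ → es.getD r ∅ ∈ pathEdges k (P j₀) := by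
    intro r
    induction r with
    | zero => intro _; exact hj₀
    | succ n ihn =>
      intro hr
      have hn := ihn (by omega)
      obtain ⟨j', hj'⟩ := hj (n + 1) hr
      have hwn := hprop n (by omega)
      have hmod : (n + 1) % ℓ = n + 1 := Nat.mod_eq_of_lt hr
      rw [hmod] at hwn
      by_cases hjj : j' = j₀
      · rwa [hjj] at hj'
      · exfalso
        obtain ⟨a, ha, hae⟩ := mem_pathEdges.mp hn
        obtain ⟨a', ha', hae'⟩ := mem_pathEdges.mp hj'
        have hw1 : ws.getD n 0 ∈ (P j₀).toFinset :=
          pathEdge_subset hk (hP j₀) ha (hae ▸ hwn.1)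
        have hw2 : ws.getD n 0 ∈ (P j').toFinset :=
          pathEdge_subset hk (hP j') ha' (hae' ▸ hwn.2)
        exact Finset.disjoint_left.mp (hdisj j' j₀ hjj) hw2 hw1
  set vsP := P j₀ with hvsP
  have hPP := hP j₀
  set N := numPathEdges k vsP with hN
  -- step 2: index function
  have hidx : ∀ r, r < ℓ → ∃ a, a < N ∧ pathEdge k vsP a = es.getD r ∅ := by
    intro r hr; exact mem_pathEdges.mp (hsame r hr)
  choose a haN hae using hidx
  -- step 3: injectivity of indices
  have hainj : ∀ r hr r' hr', r ≠ r' → a r hr ≠ a r' hr' := by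
    intro r hr r' hr' hne heq
    have : es.getD r ∅ = es.getD r' ∅ := by rw [← hae r hr, ← hae r' hr', heq]
    rw [KDX.getD_lt _ _ hr, KDX.getD_lt _ _ hr'] at this
    exact hne ((List.Nodup.getElem_inj_iff hnd).mp this)
  -- adjacency of consecutive indices
  have hmodlt : ∀ r, r < ℓ → (r + 1) % ℓ < ℓ := fun r hr => Nat.mod_lt _ (by omega)
  have hmodne : ∀ r, r < ℓ → (r + 1) % ℓ ≠ r := by
    intro r hr
    by_cases h1 : r + 1 < ℓ
    · rw [Nat.mod_eq_of_lt h1]; omega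
    · have : r + 1 = ℓ := by omega
      rw [this, Nat.mod_self]; omega
  have hadj : ∀ r (hr : r < ℓ), a ((r+1) % ℓ) (hmodlt r hr) = a r hr + 1 ∨
      a r hr = a ((r+1) % ℓ) (hmodlt r hr) + 1 := by
    intro r hr
    have hwr := hprop r hr
    set r' := (r + 1) % ℓ with hr'def
    have hr' : r' < ℓ := hmodlt r hr
    have hne : a r hr ≠ a r' hr' := hainj r hr r' hr' (fun h => hmodne r hr h.symm)
    have hx1 : ws.getD r 0 ∈ pathEdge k vsP (a r hr) := by rw [hae r hr]; exact hwr.1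
    have hx2 : ws.getD r 0 ∈ pathEdge k vsP (a r' hr') := by rw [hae r' hr']; exact hwr.2
    rcases lt_trichotomy (a r hr) (a r' hr') with hlt | heq | hgt
    · exact Or.inl (pathEdge_inter hk hPP (haN r hr) (haN r' hr') hlt hx1 hx2).1
    · exact absurd heq hne
    · exact Or.inr (pathEdge_inter hk hPP (haN r' hr') (haN r hr) hgt hx2 hx1).1
  -- totalize the index function
  set b : ℕ → ℕ := fun r => if h : r < ℓ then a r h else 0 with hbdef
  have hb : ∀ r (hr : r < ℓ), b r = a r hr := fun r hr => dif_pos hr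
  have hbN : ∀ r, r < ℓ → b r < N := fun r hr => (hb r hr) ▸ haN r hr
  have hbinj : ∀ r, r < ℓ → ∀ r', r' < ℓ → r ≠ r' → b r ≠ b r' := by
    intro r hr r' hr' hne
    rw [hb r hr, hb r' hr']
    exact hainj r hr r' hr' hne
  have hbadj : ∀ r, r < ℓ → b ((r + 1) % ℓ) = b r + 1 ∨ b r = b ((r + 1) % ℓ) + 1 := by
    intro r hr
    rw [hb r hr, hb _ (hmodlt r hr)]
    exact hadj r hr
  by_cases hl2 : ℓ = 2
  · -- two edges sharing two distinct vertices: impossible in a loose path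
    have h0 : (0 : ℕ) < ℓ := by omega
    have h1 : (1 : ℕ) < ℓ := by omega
    have hw0 := hprop 0 h0
    have hw1 := hprop 1 h1
    have hm0 : (0 + 1) % ℓ = 1 := by rw [hl2]
    have hm1 : (1 + 1) % ℓ = 0 := by rw [hl2]
    rw [hm0] at hw0
    rw [hm1] at hw1
    have hane : a 0 h0 ≠ a 1 h1 := hainj 0 h0 1 h1 (by omega)
    have hwne : ws.getD 0 0 ≠ ws.getD 1 0 := by
      rw [KDX.getD_lt _ _ (by omega), KDX.getD_lt _ _ (by omega)]
      intro hcon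
      have := (List.Nodup.getElem_inj_iff hwnd).mp hcon
      omega
    have hx01 : ws.getD 0 0 ∈ pathEdge k vsP (a 0 h0) := by rw [hae 0 h0]; exact hw0.1
    have hx02 : ws.getD 0 0 ∈ pathEdge k vsP (a 1 h1) := by rw [hae 1 h1]; exact hw0.2
    have hx11 : ws.getD 1 0 ∈ pathEdge k vsP (a 1 h1) := by rw [hae 1 h1]; exact hw1.1
    have hx12 : ws.getD 1 0 ∈ pathEdge k vsP (a 0 h0) := by rw [hae 0 h0]; exact hw1.2
    rcases lt_trichotomy (a 0 h0) (a 1 h1) with hlt | heq | hgt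
    · have e0 := (pathEdge_inter hk hPP (haN 0 h0) (haN 1 h1) hlt hx01 hx02).2
      have e1 := (pathEdge_inter hk hPP (haN 0 h0) (haN 1 h1) hlt hx12 hx11).2
      exact hwne (e0.trans e1.symm)
    · exact hane heq
    · have e0 := (pathEdge_inter hk hPP (haN 1 h1) (haN 0 h0) hgt hx02 hx01).2
      have e1 := (pathEdge_inter hk hPP (haN 1 h1) (haN 0 h0) hgt hx11 hx12).2
      exact hwne (e0.trans e1.symm)
  · -- ℓ ≥ 3 : look at the edge with maximal index
    have hl3 : 3 ≤ ℓ := by omega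
    set S : Finset ℕ := (Finset.range ℓ).image b with hSdef
    have hSne : S.Nonempty := ⟨b 0, Finset.mem_image.mpr ⟨0, Finset.mem_range.mpr (by omega), rfl⟩⟩
    set M := S.max' hSne with hM
    obtain ⟨rs, hrsmem, hrsb⟩ := Finset.mem_image.mp (S.max'_mem hSne)
    have hrs : rs < ℓ := Finset.mem_range.mp hrsmem
    have hle : ∀ r, r < ℓ → b r ≤ M :=
      fun r hr => S.le_max' _ (Finset.mem_image.mpr ⟨r, Finset.mem_range.mpr hr, rfl⟩)
    set nx := (rs + 1) % ℓ with hnx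
    have hnxlt : nx < ℓ := hmodlt rs hrs
    have hnxne : nx ≠ rs := hmodne rs hrs
    set p := if rs = 0 then ℓ - 1 else rs - 1 with hpdef
    have hplt : p < ℓ := by rw [hpdef]; split <;> omega
    have hpmod : (p + 1) % ℓ = rs := by
      rw [hpdef]
      by_cases h0 : rs = 0
      · simp [h0]
        rw [Nat.sub_add_cancel (by omega), Nat.mod_self]
      · rw [if_neg h0, Nat.sub_add_cancel (by omega), Nat.mod_eq_of_lt hrs]
    have hpne : p ≠ rs := by
      rw [hpdef]; split <;> omega
    have hpnx : p ≠ nx := by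
      rw [hpdef, hnx]
      by_cases h0 : rs = 0
      · rw [if_pos h0, h0]
        rw [Nat.mod_eq_of_lt (by omega)]
        omega
      · rw [if_neg h0]
        by_cases h1 : rs + 1 < ℓ
        · rw [Nat.mod_eq_of_lt h1]; omega
        · have : rs + 1 = ℓ := by omega
          rw [this, Nat.mod_self]; omega
    have hbnx : b nx = M - 1 ∧ 1 ≤ M := by
      rcases hbadj rs hrs with h | h
      · rw [← hnx] at h
        have := hle nx hnxlt
        have hne := hbinj nx hnxlt rs hrs hnxne
        omega
      · rw [← hnx] at h
        have hne := hbinj nx hnxlt rs hrs hnxne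
        have := hle nx hnxlt
        omega
    have hbp : b p = M - 1 := by
      rcases hbadj p hplt with h | h
      · rw [hpmod] at h
        have := hle p hplt
        have hne := hbinj p hplt rs hrs hpne
        omega
      · rw [hpmod] at h
        have := hle p hplt
        have hne := hbinj p hplt rs hrs hpne
        omega
    exact hbinj p hplt nx hnxlt hpnx (by omega)

lemma getD_take {α : Type*} (l : List α) (d : α) {n r : ℕ} (hr : r < n) (hl : r < l.length) :
    (l.take n).getD r d = l.getD r d := by
  rw [KDX.getD_lt _ _ (by simp; omega), KDX.getD_lt _ _ hl]
  exact List.getElem_take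

/-- From a cycle, a chord `u ∈ es[i] ∩ es[j]` avoiding the linking vertices of the
arc from `i` to `j` yields a (shorter) cycle on that arc. -/
lemma subcycle {H : Finset (Finset ℕ)} {es : List (Finset ℕ)} {vs : List ℕ}
    (hnd : es.Nodup) (hmem : ∀ e ∈ es, e ∈ H) (hvnd : vs.Nodup)
    (hvlen : vs.length = es.length)
    (hprop : ∀ r < es.length,
      vs.getD r 0 ∈ es.getD r ∅ ∧ vs.getD r 0 ∈ es.getD ((r + 1) % es.length) ∅)
    {i j u : ℕ} (hij : i + 2 ≤ j) (hj : j < es.length)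
    (hui : u ∈ es.getD i ∅) (huj : u ∈ es.getD j ∅)
    (hufresh : ∀ m, i ≤ m → m < j → vs.getD m 0 ≠ u) :
    ∃ c, IsBergeCycleIn H c ∧ c.length = j - i + 1 := by
  set c := (es.drop i).take (j - i + 1) with hc
  set w := ((vs.drop i).take (j - i)) ++ [u] with hw
  have hlc : c.length = j - i + 1 := by
    simp [hc]; omega
  have hlw' : ((vs.drop i).take (j - i)).length = j - i := by
    simp; omega
  have hdl : (vs.drop i).length = vs.length - i := by simp
  have hcr : ∀ r, r < j - i + 1 → c.getD r ∅ = es.getD (i + r) ∅ := by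
    intro r hr
    rw [hc, getD_take _ _ hr (by simp; omega), KDX.getD_drop _ _ _ (by omega)]
  have hwr : ∀ r, r < j - i → w.getD r 0 = vs.getD (i + r) 0 := by
    intro r hr
    rw [hw, KDX.getD_append_lt _ _ _ (by omega : r < ((vs.drop i).take (j-i)).length),
      getD_take _ _ hr (by omega), KDX.getD_drop _ _ _ (by omega)]
  refine ⟨c, ⟨by omega, ?_, ?_, w, ?_, ?_, ?_⟩, hlc⟩
  · exact hnd.sublist ((List.take_sublist _ _).trans (List.drop_sublist _ _))
  · intro e he
    exact hmem e (List.mem_of_mem_drop (List.mem_of_mem_take he))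
  · rw [hw]
    simp only [List.nodup_append, List.nodup_cons, List.nodup_nil, List.disjoint_singleton]
    refine ⟨hvnd.sublist ((List.take_sublist _ _).trans (List.drop_sublist _ _)), by simp, ?_⟩
    intro a ha b hb hab
    have hcon : u ∈ (vs.drop i).take (j - i) := by simp at hb; rw [← hb, ← hab]; exact ha
    obtain ⟨r, hr, hru⟩ := (KDX.mem_iff_getD _ 0 u).mp hcon
    rw [hlw'] at hr
    rw [getD_take _ _ hr (by omega), KDX.getD_drop _ _ _ (by omega)] at hru
    exact hufresh (i + r) (by omega) (by omega) hru
  · rw [hw]; simp; omega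
  · intro r hr
    rw [hlc] at hr
    by_cases hrl : r < j - i
    · rw [hwr r hrl, hcr r (by omega)]
      have hmod : (r + 1) % c.length = r + 1 := by rw [hlc]; exact Nat.mod_eq_of_lt (by omega)
      rw [hmod, hcr (r+1) (by omega)]
      have hp := hprop (i + r) (by omega)
      have hm2 : (i + r + 1) % es.length = i + r + 1 := Nat.mod_eq_of_lt (by omega)
      rw [hm2] at hp
      exact ⟨hp.1, by rw [show i + (r+1) = i + r + 1 by ring]; exact hp.2⟩
    · have hreq : r = j - i := by omega
      have h1 : w.getD r 0 = u := by
        have hx := KDX.getD_append_len ((vs.drop i).take (j - i)) u 0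
        rw [hlw'] at hx
        rw [hw, hreq]
        exact hx
      have hmod : (r + 1) % c.length = 0 := by
        rw [hlc, hreq]
        exact Nat.mod_self _
      rw [h1, hcr r (by omega), hmod, hcr 0 (by omega)]
      rw [hreq, show i + (j - i) = j by omega]
      exact ⟨huj, hui⟩

lemma cycle_union_card {H : Finset (Finset ℕ)} {k K : ℕ} (hk : 2 ≤ k) (hK : 3 ≤ K)
    (hcard : ∀ e ∈ H, e.card = k) (hg : GirthAtLeast H K)
    (hcyc : ∃ es, IsBergeCycleIn H es) :
    K * (k - 1) ≤ (H.biUnion id).card := by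
  classical
  have hex : ∃ n, ∃ es, IsBergeCycleIn H es ∧ es.length = n := by
    obtain ⟨es, hes⟩ := hcyc; exact ⟨es.length, es, hes, rfl⟩
  set ℓ := Nat.find hex with hldef
  obtain ⟨es, hes, heslen⟩ := Nat.find_spec hex
  have hmin : ∀ c, IsBergeCycleIn H c → ℓ ≤ c.length :=
    fun c hc => Nat.find_min' hex ⟨c, hc, rfl⟩
  have hlK : K ≤ ℓ := by have := hg es hes; omega
  obtain ⟨hl2, hnd, hmem, vs, hvnd, hvlen, hprop⟩ := hes
  rw [heslen] at hvlen hprop hl2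
  have hmemD : ∀ r, r < ℓ → es.getD r ∅ ∈ H := by
    intro r hr
    apply hmem
    rw [KDX.getD_lt _ _ (by omega : r < es.length)]
    exact List.getElem_mem _
  have hcardD : ∀ r, r < ℓ → (es.getD r ∅).card = k := fun r hr => hcard _ (hmemD r hr)
  have hndD : ∀ r r', r < ℓ → r' < ℓ → r ≠ r' → es.getD r ∅ ≠ es.getD r' ∅ := by
    intro r r' hr hr' hne
    rw [KDX.getD_lt _ _ (by omega : r < es.length), KDX.getD_lt _ _ (by omega : r' < es.length)]
    intro hcon
    exact hne ((List.Nodup.getElem_inj_iff hnd).mp hcon)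
  have hpair : ∀ r r', r < ℓ → r' < ℓ → r ≠ r' →
      ((es.getD r ∅) ∩ (es.getD r' ∅)).card ≤ 1 := by
    intro r r' hr hr' hne
    exact pair_inter_le_one hK hg (hmemD r hr) (hmemD r' hr') (hndD r r' hr hr' hne)
  -- no chords between non-adjacent edges of the minimal cycle
  have hSC : ∀ d i j u, j = i + d → 2 ≤ d → j < ℓ → ¬(i = 0 ∧ j = ℓ - 1) →
      u ∈ es.getD i ∅ → u ∈ es.getD j ∅ → False := by
    intro d
    induction d using Nat.strong_induction_on with
    | _ d ih =>
      rintro i j u rfl hd hj hne hui huj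
      by_cases hfresh : ∀ m, i ≤ m → m < i + d → vs.getD m 0 ≠ u
      · obtain ⟨c, hc, hclen⟩ := subcycle hnd hmem hvnd (by omega)
          (by rw [heslen]; exact hprop) (by omega : i + 2 ≤ i + d) (by omega) hui huj hfresh
        have := hmin c hc
        omega
      · push_neg at hfresh
        obtain ⟨m, hmi, hmj, hmu⟩ := hfresh
        have hm1 : m + 1 < ℓ := by omega
        have hpm := hprop m (by omega)
        rw [Nat.mod_eq_of_lt (by omega : m + 1 < ℓ)] at hpm
        rw [hmu] at hpm
        by_cases hcase : i + 2 ≤ m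
        · exact ih (m - i) (by omega) i m u (by omega) (by omega) (by omega) (by omega) hui hpm.1
        · by_cases hcase2 : m = i + 1
          · -- edges i and i+1 share u = v_{i+1} and v_i : two common vertices
            have hpi := hprop i (by omega)
            rw [Nat.mod_eq_of_lt (by omega : i + 1 < ℓ)] at hpi
            have hvne : vs.getD i 0 ≠ u := by
              rw [← hmu, hcase2]
              rw [KDX.getD_lt _ _ (by omega : i < vs.length),
                KDX.getD_lt _ _ (by omega : i + 1 < vs.length)]
              intro hcon
              have := (List.Nodup.getElem_inj_iff hvnd).mp hcon
              omega
            have h2 : 2 ≤ ((es.getD i ∅) ∩ (es.getD (i+1) ∅)).card := by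
              apply Finset.one_lt_card.mpr
              refine ⟨vs.getD i 0, Finset.mem_inter.mpr ⟨hpi.1, hpi.2⟩, u,
                Finset.mem_inter.mpr ⟨hui, hcase2 ▸ hpm.1⟩, hvne⟩
            have := hpair i (i+1) (by omega) (by omega) (by omega)
            omega
          · -- m = i : u = v_i ∈ es[i+1]
            have hmeq : m = i := by omega
            subst hmeq
            by_cases hd2 : d = 2
            · -- edges m+1 and m+2 share u = v_m and v_{m+1}
              have hpi := hprop (m+1) (by omega)
              rw [Nat.mod_eq_of_lt (by omega : m + 2 < ℓ)] at hpi
              have hvne : vs.getD (m+1) 0 ≠ u := by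
                rw [← hmu]
                rw [KDX.getD_lt _ _ (by omega : m + 1 < vs.length),
                  KDX.getD_lt _ _ (by omega : m < vs.length)]
                intro hcon
                have := (List.Nodup.getElem_inj_iff hvnd).mp hcon
                omega
              have h2 : 2 ≤ ((es.getD (m+1) ∅) ∩ (es.getD (m+2) ∅)).card := by
                apply Finset.one_lt_card.mpr
                refine ⟨vs.getD (m+1) 0, Finset.mem_inter.mpr ⟨hpi.1, hpi.2⟩, u,
                  Finset.mem_inter.mpr ⟨hpm.2, by rw [show m + 2 = m + d by omega]; exact huj⟩, hvne⟩
              have := hpair (m+1) (m+2) (by omega) (by omega) (by omega)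
              omega
            · exact ih (d - 1) (by omega) (m+1) (m+d) u (by omega) (by omega) (by omega)
                (by omega) hpm.2 huj
  -- now count the union of the cycle edges
  set U : ℕ → Finset ℕ := fun m => (Finset.range m).biUnion (fun r => es.getD r ∅) with hU
  have hUstep : ∀ m, U (m + 1) = es.getD m ∅ ∪ U m := by
    intro m
    rw [hU]
    simp only [Finset.range_add_one, Finset.biUnion_insert]
  have hUsub : ∀ m, m ≤ ℓ → U m ⊆ H.biUnion id := by
    intro m hm x hx
    obtain ⟨r, hr, hxr⟩ := Finset.mem_biUnion.mp hx
    exact Finset.mem_biUnion.mpr ⟨_, hmemD r (by simp at hr; omega), hxr⟩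
  have hcount : ∀ m, 1 ≤ m → m ≤ ℓ - 1 → m * (k - 1) + 1 ≤ (U m).card := by
    intro m
    induction m with
    | zero => omega
    | succ n ihn =>
      intro h1 h2
      by_cases hn0 : n = 0
      · subst hn0
        have : U 1 = es.getD 0 ∅ := by
          rw [hU]; simp
        rw [this, hcardD 0 (by omega)]
        omega
      · have hihn := ihn (by omega) (by omega)
        have hint : (es.getD n ∅ ∩ U n) ⊆ es.getD n ∅ ∩ es.getD (n-1) ∅ := by
          intro x hx
          obtain ⟨hx1, hx2⟩ := Finset.mem_inter.mp hx
          obtain ⟨r, hr, hxr⟩ := Finset.mem_biUnion.mp hx2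
          simp only [Finset.mem_range] at hr
          by_cases hrn : r = n - 1
          · exact Finset.mem_inter.mpr ⟨hx1, hrn ▸ hxr⟩
          · exfalso
            exact hSC (n - r) r n x (by omega) (by omega) (by omega) (by omega) hxr hx1
        have hi1 : (es.getD n ∅ ∩ U n).card ≤ 1 :=
          le_trans (Finset.card_le_card hint) (hpair n (n-1) (by omega) (by omega) (by omega))
        have huni := Finset.card_union_add_card_inter (es.getD n ∅) (U n)
        rw [hUstep n]
        have hcn := hcardD n (by omega)
        have hmul : (n + 1) * (k - 1) = n * (k - 1) + (k - 1) := by ring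
        omega
  -- last edge
  have hlast : ℓ * (k - 1) ≤ (U ℓ).card := by
    have hc1 := hcount (ℓ - 1) (by omega) (by omega)
    have hint : (es.getD (ℓ-1) ∅ ∩ U (ℓ-1)) ⊆
        (es.getD (ℓ-1) ∅ ∩ es.getD (ℓ-2) ∅) ∪ (es.getD (ℓ-1) ∅ ∩ es.getD 0 ∅) := by
      intro x hx
      obtain ⟨hx1, hx2⟩ := Finset.mem_inter.mp hx
      obtain ⟨r, hr, hxr⟩ := Finset.mem_biUnion.mp hx2
      simp only [Finset.mem_range] at hr
      by_cases hr2 : r = ℓ - 2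
      · exact Finset.mem_union_left _ (Finset.mem_inter.mpr ⟨hx1, hr2 ▸ hxr⟩)
      · by_cases hr0 : r = 0
        · exact Finset.mem_union_right _ (Finset.mem_inter.mpr ⟨hx1, hr0 ▸ hxr⟩)
        · exfalso
          exact hSC (ℓ - 1 - r) r (ℓ - 1) x (by omega) (by omega) (by omega) (by omega) hxr hx1
    have hi2 : (es.getD (ℓ-1) ∅ ∩ U (ℓ-1)).card ≤ 2 := by
      have := Finset.card_union_le (es.getD (ℓ-1) ∅ ∩ es.getD (ℓ-2) ∅)
        (es.getD (ℓ-1) ∅ ∩ es.getD 0 ∅)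
      have hp1 := hpair (ℓ-1) (ℓ-2) (by omega) (by omega) (by omega)
      have hp2 := hpair (ℓ-1) 0 (by omega) (by omega) (by omega)
      have := Finset.card_le_card hint
      omega
    have huni := Finset.card_union_add_card_inter (es.getD (ℓ-1) ∅) (U (ℓ-1))
    have hstep : U ℓ = es.getD (ℓ-1) ∅ ∪ U (ℓ-1) := by
      have h := hUstep (ℓ - 1)
      rw [show ℓ - 1 + 1 = ℓ by omega] at h
      exact h
    have hcl := hcardD (ℓ-1) (by omega)
    have hmul : ℓ * (k - 1) = (ℓ - 1) * (k - 1) + 1 * (k - 1) := by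
      rw [← Nat.add_mul]
      congr 1
      omega
    rw [hstep]
    omega
  have hfinal := Finset.card_le_card (hUsub ℓ (le_refl _))
  have hKl : K * (k - 1) ≤ ℓ * (k - 1) := Nat.mul_le_mul_right _ hlK
  omega

lemma ratio_acyclic {k : ℕ} (hk : 2 ≤ k) {V' : Finset ℕ} {E' : Finset (Finset ℕ)}
    (hcards : ∀ e ∈ E', e.card = k) (hac : BergeAcyclic E') (hEV : ∀ e ∈ E', e ⊆ V')
    (hkV : k < V'.card) :
    ((E'.card : ℝ) - 1) / ((V'.card : ℝ) - (k : ℝ)) ≤ 1 / ((k : ℝ) - 1) := by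
  have hden : (0 : ℝ) < (V'.card : ℝ) - k := by
    rw [sub_pos]; exact_mod_cast hkV
  have hkpos : (0 : ℝ) < (k : ℝ) - 1 := by
    have : (1 : ℝ) < k := by exact_mod_cast (by omega : 1 < k)
    linarith
  rcases E'.eq_empty_or_nonempty with rfl | hne
  · simp only [Finset.card_empty, Nat.cast_zero]
    have h1 : ((0 : ℝ) - 1) / ((V'.card : ℝ) - k) ≤ 0 := by
      rw [div_nonpos_iff]
      right
      constructor <;> linarith
    have h2 : (0 : ℝ) ≤ 1 / ((k : ℝ) - 1) := by positivity
    linarith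
  · have hcnt := acyclic_union_card hk E' hcards hac hne
    have hsub : E'.biUnion id ⊆ V' := Finset.biUnion_subset.mpr hEV
    have hcard : (k - 1) * E'.card + 1 ≤ V'.card :=
      le_trans hcnt (Finset.card_le_card hsub)
    have hreal : ((k : ℝ) - 1) * (E'.card : ℝ) + 1 ≤ (V'.card : ℝ) := by
      have := hcard
      have hcast : ((k - 1 : ℕ) : ℝ) = (k : ℝ) - 1 := by
        rw [Nat.cast_sub (by omega)]; norm_num
      calc ((k : ℝ) - 1) * (E'.card : ℝ) + 1 = (((k-1) * E'.card + 1 : ℕ) : ℝ) := by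
            push_cast [hcast]; ring
        _ ≤ _ := by exact_mod_cast hcard
    rw [div_le_div_iff₀ hden hkpos]
    nlinarith

end KDX

/-- k-density of Berge acyclic graphs and of sparse absorbers. -/
theorem kDensity_acyclic_and_sparse_absorber (k : ℕ) (hk : 3 ≤ k) :
    (∀ F : HGraph, F.IsUniform k → BergeAcyclic F.edges → k < F.verts.card →
      kDensityLE F k (1 / ((k : ℝ) - 1))) ∧
    (∀ K : ℕ, 3 ≤ K →
      ∀ (G : HGraph) (X : Finset ℕ) (A : Absorber G k X),
        G.IsUniform k → X.card = k - 1 → A.KSparse K → k < A.graph.verts.card →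
        kDensityLE A.graph k
          (2 / ((k : ℝ) - 1) + 1 / ((K : ℝ) * ((k : ℝ) - 1) - (k : ℝ)))) := by
  constructor
  · -- Part (i)
    intro F hFuni hFac hFv V' hV' E' hE' hEV hkV
    exact KDX.ratio_acyclic (by omega) (fun e he => (hFuni e (hE' he)).2)
      (KDX.bergeAcyclic_mono hE' hFac) hEV hkV
  · -- Part (ii)
    intro K hK G X A hGuni hX hsparse hAv V' hV' E' hE' hEV hkV
    have hkpos : (0 : ℝ) < (k : ℝ) - 1 := by
      have : (1 : ℝ) < k := by exact_mod_cast (by omega : 1 < k)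
      linarith
    have hden : (0 : ℝ) < (V'.card : ℝ) - k := by
      rw [sub_pos]; exact_mod_cast hkV
    have hQn : k + 3 ≤ K * (k - 1) := by
      have h1 : 3 * (k - 1) ≤ K * (k - 1) := Nat.mul_le_mul_right _ hK
      omega
    have hQpos : (0 : ℝ) < (K : ℝ) * ((k : ℝ) - 1) - (k : ℝ) := by
      have : ((k + 3 : ℕ) : ℝ) ≤ ((K * (k - 1) : ℕ) : ℝ) := by exact_mod_cast hQn
      push_cast [Nat.cast_sub (by omega : 1 ≤ k)] at this
      nlinarith
    -- edges of the absorber are edges of `G`, hence `k`-sets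
    have hsub1 : ∀ e ∈ A.edgeSet, e ∈ G.edges := by
      intro e he
      rcases Finset.mem_union.mp he with h | h
      · obtain ⟨j, -, hj⟩ := Finset.mem_biUnion.mp h
        obtain ⟨i, hi, rfl⟩ := KDX.mem_pathEdges.mp hj
        exact (A.path₁ j).2 i hi
      · obtain ⟨j, -, hj⟩ := Finset.mem_biUnion.mp h
        obtain ⟨i, hi, rfl⟩ := KDX.mem_pathEdges.mp hj
        exact (A.path₂ j).2 i hi
    have hE'A : E' ⊆ A.edgeSet := hE'
    have hcards : ∀ e ∈ E', e.card = k := fun e he => (hGuni e (hsub1 e (hE'A he))).2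
    have hgE : GirthAtLeast E' K := by
      intro es hes
      exact hsparse es (KDX.bergeCycle_mono (fun e he => Finset.mem_insert_of_mem (hE'A he)) hes)
    by_cases hcyc : ∃ es, IsBergeCycleIn E' es
    · -- E' contains a Berge cycle: it spans at least K(k-1) vertices
      have hbig := KDX.cycle_union_card (by omega) hK hcards hgE hcyc
      have hsubV : E'.biUnion id ⊆ V' := Finset.biUnion_subset.mpr hEV
      have hKv : K * (k - 1) ≤ V'.card := le_trans hbig (Finset.card_le_card hsubV)
      -- split E' into the two path systems
      set E₁ : Finset (Finset ℕ) := Finset.univ.biUnion (fun j => pathEdges k (A.P₁ j)) with hE₁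
      set Fa := E' ∩ E₁ with hFa
      set Fb := E' \ E₁ with hFb
      have hFaP : ∀ e ∈ Fa, ∃ j, e ∈ pathEdges k (A.P₁ j) := by
        intro e he
        obtain ⟨j, -, hj⟩ := Finset.mem_biUnion.mp (Finset.mem_inter.mp he).2
        exact ⟨j, hj⟩
      have hFbP : ∀ e ∈ Fb, ∃ j, e ∈ pathEdges k (A.P₂ j) := by
        intro e he
        have h1 := hE'A (Finset.mem_sdiff.mp he).1
        rcases Finset.mem_union.mp h1 with h | h
        · exact absurd h (Finset.mem_sdiff.mp he).2
        · obtain ⟨j, -, hj⟩ := Finset.mem_biUnion.mp h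
          exact ⟨j, hj⟩
      have hFaAc : BergeAcyclic Fa :=
        KDX.pathSystem_acyclic (by omega) (fun j => (A.path₁ j).1) A.disj₁ hFaP
      have hFbAc : BergeAcyclic Fb :=
        KDX.pathSystem_acyclic (by omega) (fun j => (A.path₂ j).1) A.disj₂ hFbP
      have hFane : Fa.Nonempty := by
        rcases Fa.eq_empty_or_nonempty with h | h
        · exfalso
          have hEFb : Fb = E' := by
            rw [hFb, Finset.sdiff_eq_self_iff_disjoint, Finset.disjoint_left]
            intro x hx1 hx2
            have hxFa : x ∈ Fa := Finset.mem_inter.mpr ⟨hx1, hx2⟩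
            rw [h] at hxFa
            exact absurd hxFa (Finset.notMem_empty x)
          obtain ⟨es, hes⟩ := hcyc
          exact hFbAc es (by rwa [hEFb])
        · exact h
      have hFbne : Fb.Nonempty := by
        rcases Fb.eq_empty_or_nonempty with h | h
        · exfalso
          have hEFa : Fa = E' := by
            rw [hFa, Finset.inter_eq_left]
            intro e he
            by_contra hcon
            have hx : e ∈ Fb := Finset.mem_sdiff.mpr ⟨he, hcon⟩
            rw [h] at hx
            exact absurd hx (Finset.notMem_empty e)
          obtain ⟨es, hes⟩ := hcyc
          exact hFaAc es (by rwa [hEFa])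
        · exact h
      have hcFa := KDX.acyclic_union_card (by omega : 2 ≤ k) Fa
        (fun e he => hcards e (Finset.mem_of_mem_inter_left he)) hFaAc hFane
      have hcFb := KDX.acyclic_union_card (by omega : 2 ≤ k) Fb
        (fun e he => hcards e (Finset.mem_sdiff.mp he).1) hFbAc hFbne
      have hvaV : (Fa.biUnion id).card ≤ V'.card :=
        Finset.card_le_card (Finset.biUnion_subset.mpr
          (fun e he => hEV e (Finset.mem_of_mem_inter_left he)))
      have hvbV : (Fb.biUnion id).card ≤ V'.card :=
        Finset.card_le_card (Finset.biUnion_subset.mpr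
          (fun e he => hEV e (Finset.mem_sdiff.mp he).1))
      have hsplit : Fa.card + Fb.card = E'.card := Finset.card_inter_add_card_sdiff E' E₁
      -- ℕ inequality: (k-1) * E'.card + 2 ≤ 2 * V'.card
      have hnat : (k - 1) * E'.card + 2 ≤ 2 * V'.card := by
        have h1 : (k-1) * E'.card = (k-1) * Fa.card + (k-1) * Fb.card := by
          rw [← Nat.mul_add, hsplit]
        omega
      -- transfer to ℝ and finish
      have hcast : ((k - 1 : ℕ) : ℝ) = (k : ℝ) - 1 := by
        rw [Nat.cast_sub (by omega)]; norm_num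
      have hrealA : ((k : ℝ) - 1) * (E'.card : ℝ) + 2 ≤ 2 * (V'.card : ℝ) := by
        calc ((k : ℝ) - 1) * (E'.card : ℝ) + 2 = (((k-1) * E'.card + 2 : ℕ) : ℝ) := by
              push_cast [hcast]; ring
          _ ≤ ((2 * V'.card : ℕ) : ℝ) := by exact_mod_cast hnat
          _ = 2 * (V'.card : ℝ) := by push_cast; ring
      have hrealB : (K : ℝ) * ((k : ℝ) - 1) ≤ (V'.card : ℝ) := by
        calc (K : ℝ) * ((k : ℝ) - 1) = ((K * (k - 1) : ℕ) : ℝ) := by push_cast [hcast]; ring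
          _ ≤ _ := by exact_mod_cast hKv
      rw [div_le_iff₀ hden]
      have hexp : (2 / ((k : ℝ) - 1) + 1 / ((K : ℝ) * ((k : ℝ) - 1) - (k : ℝ))) *
          ((V'.card : ℝ) - (k : ℝ)) =
          2 * ((V'.card : ℝ) - k) / ((k : ℝ) - 1) +
          ((V'.card : ℝ) - k) / ((K : ℝ) * ((k : ℝ) - 1) - (k : ℝ)) := by
        field_simp
      rw [hexp]
      have h1 : ((E'.card : ℝ) - 1) ≤ 2 * ((V'.card : ℝ) - k) / ((k : ℝ) - 1) + 1 := by
        rw [div_add' _ _ _ (ne_of_gt hkpos), le_div_iff₀ hkpos]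
        nlinarith
      have h2 : (1 : ℝ) ≤ ((V'.card : ℝ) - k) / ((K : ℝ) * ((k : ℝ) - 1) - (k : ℝ)) := by
        rw [le_div_iff₀ hQpos]
        nlinarith
      linarith
    · -- E' is Berge acyclic
      have hac : BergeAcyclic E' := fun es hes => hcyc ⟨es, hes⟩
      have hr := KDX.ratio_acyclic (by omega : 2 ≤ k) hcards hac hEV hkV
      have h2 : (0 : ℝ) < 1 / ((K : ℝ) * ((k : ℝ) - 1) - (k : ℝ)) := one_div_pos.mpr hQpos
      have h3 : 1 / ((k : ℝ) - 1) ≤ 2 / ((k : ℝ) - 1) :=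
        (div_le_div_iff_of_pos_right hkpos).mpr (by norm_num)
      linarith
end

section
/- For all integers K' ≥ 1 and r ≥ 1, set m = 2^{2K'(2K'−1)} and q = 2^{2K'−1}·r·m!. Then there exists an (m,q)-double-strip whose girth is at least 2K'. -/
open Finset

attribute [local instance] Classical.propDecidable

/-- The cyclic successor of an index. -/
def stripNext {q : ℕ} (i : Fin q) : Fin q := ⟨(i.val + 1) % q, Nat.mod_lt _ i.pos⟩

/-- Encoding of a pair of `(m,q)`-strips: the classes are `B_i = {i} × Fin m`
(`i : Fin q`), and the `i`-th perfect matching of the strip `σ` joins `(i, a)` to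
`(i+1, σ i a)`. The union of the two strips `σ, τ` as a `2`-uniform graph. -/
def doubleStripGraph (m q : ℕ) (σ τ : Fin q → Equiv.Perm (Fin m)) :
    SimpleGraph (Fin q × Fin m) :=
  SimpleGraph.fromRel fun x y =>
    y.1 = stripNext x.1 ∧ (y.2 = σ x.1 x.2 ∨ y.2 = τ x.1 x.2)

/-- A strip is cyclical if following its matchings all the way around `B_1, B_2, …, B_1`
induces the identity permutation of `B_1`. -/
def IsCyclicalStrip {m q : ℕ} (σ : Fin q → Equiv.Perm (Fin m)) : Prop :=
  (List.ofFn σ).reverse.prod = 1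

namespace DStrip


abbrev Letter := Bool × Bool

def sgn (l : Letter) : ℤ := if l.2 then -1 else 1

def appZ (l : Letter) (v : ℤ × ℤ) : ℤ × ℤ :=
  if l.1 then (v.1, v.2 + 2 * sgn l * v.1) else (v.1 + 2 * sgn l * v.2, v.2)

def compat (l l' : Letter) : Prop := l.1 = l'.1 → l.2 = l'.2

def INV (l : Letter) (v : ℤ × ℤ) : Prop :=
  (if l.1 then |v.1| < |v.2| else |v.2| < |v.1|) ∧ 0 ≤ sgn l * v.1 * v.2

lemma sgn_pm (l : Letter) : sgn l = 1 ∨ sgn l = -1 := by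
  unfold sgn; rcases l.2 <;> simp

private lemma habs2 (y : ℤ) : |2 * y| = 2 * |y| := by rw [abs_mul]; norm_num

private lemma habs2eps {ε : ℤ} (hε : ε = 1 ∨ ε = -1) (y : ℤ) : |2 * ε * y| = 2 * |y| := by
  rw [show (2:ℤ) * ε * y = 2 * (ε * y) by ring, habs2, abs_mul]
  rcases hε with h | h <;> rw [h] <;> simp

private lemma habs_add_eq {a b : ℤ} (h : 0 ≤ a * b) : |a + b| = |a| + |b| := by
  rcases mul_nonneg_iff.mp h with ⟨ha, hb⟩ | ⟨ha, hb⟩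
  · rw [abs_of_nonneg ha, abs_of_nonneg hb, abs_of_nonneg (by omega)]
  · rw [abs_of_nonpos ha, abs_of_nonpos hb, abs_of_nonpos (by omega)]; ring

private lemma habs_add_ge (a b : ℤ) : |b| - |a| ≤ |a + b| := by
  have h1 := abs_add_le (a + b) (-a)
  have h2 : a + b + -a = b := by ring
  rw [h2, abs_neg] at h1
  omega

private lemma step_S {x y : ℤ} (ε : ℤ) (hε : ε = 1 ∨ ε = -1)
    (h : (|y| < |x| ∧ 0 ≤ ε * x * y) ∨ |x| < |y|) :
    |y| < |x + 2 * ε * y| ∧ 0 ≤ ε * (x + 2 * ε * y) * y := by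
  have hε2 : ε * ε = 1 := by rcases hε with h | h <;> rw [h] <;> norm_num
  have hexp : ε * (x + 2 * ε * y) * y = ε * x * y + 2 * (ε * ε) * (y * y) := by ring
  have h2y := habs2eps hε y
  rcases h with ⟨h1, h2⟩ | h1
  · constructor
    · have he : |x + 2 * ε * y| = |x| + |2 * ε * y| := by
        apply habs_add_eq
        have : x * (2 * ε * y) = 2 * (ε * x * y) := by ring
        rw [this]; linarith
      rw [h2y] at he
      linarith [abs_nonneg x, abs_nonneg y]
    · rw [hexp, hε2]
      nlinarith [mul_self_nonneg y]
  · constructor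
    · have hge := habs_add_ge x (2 * ε * y)
      rw [h2y] at hge
      linarith
    · have hlow : -(|x| * |y|) ≤ ε * x * y := by
        have h1' : -|x * y| ≤ ε * (x * y) := by
          rcases hε with h | h <;> rw [h]
          · simpa using neg_abs_le (x * y)
          · have := le_abs_self (x * y); linarith
        rw [abs_mul] at h1'
        linarith [h1']
      have hmul : (|x| + 1) * |y| ≤ |y| * |y| :=
        mul_le_mul_of_nonneg_right (by omega) (abs_nonneg y)
      rw [hexp, hε2]
      nlinarith [abs_nonneg x, abs_nonneg y, abs_mul_abs_self y]

lemma inv_step {l l' : Letter} {v : ℤ × ℤ} (hv : INV l v) (hc : compat l l') :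
    INV l' (appZ l' v) := by
  obtain ⟨x, y⟩ := v
  have hε := sgn_pm l'
  obtain ⟨h1, h2⟩ := hv
  rcases hty' : l'.1 with _ | _ <;> rcases hty : l.1 with _ | _ <;>
    unfold appZ INV <;>
    simp only [hty', if_true, if_false, Bool.false_eq_true] <;>
    rw [hty] at h1 <;> simp only [if_true, if_false, Bool.false_eq_true] at h1
  -- l' = S, l = S
  · have hd : l.2 = l'.2 := hc (by rw [hty, hty'])
    have hs : sgn l = sgn l' := by unfold sgn; rw [hd]
    rw [hs] at h2
    exact step_S (sgn l') hε (Or.inl ⟨h1, h2⟩)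
  -- l' = S, l = U
  · exact step_S (sgn l') hε (Or.inr h1)
  -- l' = U, l = S
  · have h := step_S (sgn l') hε (x := y) (y := x) (Or.inr h1)
    refine ⟨h.1, ?_⟩
    have := h.2
    nlinarith [this]
  -- l' = U, l = U
  · have hd : l.2 = l'.2 := hc (by rw [hty, hty'])
    have hs : sgn l = sgn l' := by unfold sgn; rw [hd]
    rw [hs] at h2
    have h2' : 0 ≤ sgn l' * y * x := by nlinarith [h2]
    have h := step_S (sgn l') hε (x := y) (y := x) (Or.inl ⟨h1, h2'⟩)
    refine ⟨h.1, ?_⟩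
    have := h.2
    nlinarith [this]

lemma inv_base (l : Letter) {v : ℤ × ℤ} (hv : v = (0,1) ∨ v = (1,0)) :
    INV l (appZ l v) := by
  have hε := sgn_pm l
  rcases hv with h | h <;> subst h <;>
    rcases hty : l.1 with _ | _ <;>
    unfold INV appZ <;>
    simp only [hty, if_true, if_false, Bool.false_eq_true] <;>
    rcases hε with h | h <;> rw [h] <;> norm_num

def foldZ (L : List Letter) (v : ℤ × ℤ) : ℤ × ℤ := L.foldl (fun v l => appZ l v) v

@[simp] lemma foldZ_nil (v : ℤ × ℤ) : foldZ [] v = v := rfl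

@[simp] lemma foldZ_cons (l : Letter) (L : List Letter) (v : ℤ × ℤ) :
    foldZ (l :: L) v = foldZ L (appZ l v) := rfl

private lemma appZ_growth (l : Letter) (v : ℤ × ℤ) :
    |(appZ l v).1| + |(appZ l v).2| ≤ 3 * (|v.1| + |v.2|) := by
  obtain ⟨x, y⟩ := v
  have hε := sgn_pm l
  rcases hty : l.1 with _ | _ <;> unfold appZ <;>
    simp only [hty, if_true, if_false, Bool.false_eq_true]
  · have h := abs_add_le x (2 * sgn l * y)
    have h2y := habs2eps hε y
    rw [h2y] at h
    linarith [abs_nonneg x, abs_nonneg y]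
  · have h := abs_add_le y (2 * sgn l * x)
    have h2x := habs2eps hε x
    rw [h2x] at h
    linarith [abs_nonneg x, abs_nonneg y]

lemma foldZ_growth : ∀ (L : List Letter) (v : ℤ × ℤ),
    |(foldZ L v).1| + |(foldZ L v).2| ≤ 3 ^ L.length * (|v.1| + |v.2|) := by
  intro L
  induction L with
  | nil => intro v; simp
  | cons l L ih =>
    intro v
    calc |(foldZ (l :: L) v).1| + |(foldZ (l :: L) v).2|
        ≤ 3 ^ L.length * (|(appZ l v).1| + |(appZ l v).2|) := ih (appZ l v)
      _ ≤ 3 ^ L.length * (3 * (|v.1| + |v.2|)) := by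
          have h1 := appZ_growth l v
          have h3 : (0:ℤ) ≤ 3 ^ L.length := by positivity
          exact mul_le_mul_of_nonneg_left h1 h3
      _ = 3 ^ (l :: L).length * (|v.1| + |v.2|) := by
          simp only [List.length_cons, pow_succ]; ring

lemma foldZ_inv : ∀ (L : List Letter) (l : Letter) (v : ℤ × ℤ), INV l v →
    List.Chain' compat (l :: L) → INV (L.getLastD l) (foldZ L v) := by
  intro L
  induction L with
  | nil => intro l v hv _; simpa using hv
  | cons l' L ih =>
    intro l v hv hch
    simp only [List.Chain', List.isChain_cons_cons] at hch
    have h1 : INV l' (appZ l' v) := inv_step hv hch.1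
    rw [List.getLastD_cons, foldZ_cons]
    exact ih l' (appZ l' v) h1 hch.2


section Alg

variable (k : ℕ)

abbrev Mod (k : ℕ) : ℕ := 2 * 2 ^ (k - 1)

instance : NeZero (Mod k) := ⟨by positivity⟩

abbrev MM (k : ℕ) := Matrix (Fin 2) (Fin 2) (ZMod (Mod k))

def pr : ZMod (Mod k) →+* ZMod 2 := ZMod.castHom ⟨2 ^ (k - 1), rfl⟩ (ZMod 2)

def prM : MM k →+* Matrix (Fin 2) (Fin 2) (ZMod 2) := (pr k).mapMatrix

def T (k : ℕ) : Type := {P : MM k // prM k P = 1}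

def invL (l : Letter) : Letter := (l.1, !l.2)

def matL : Letter → MM k
  | (false, false) => !![1, 2; 0, 1]
  | (false, true)  => !![1, -2; 0, 1]
  | (true, false)  => !![1, 0; 2, 1]
  | (true, true)   => !![1, 0; -2, 1]

lemma natCast_zmod2 (x : ℕ) : (x : ZMod 2) = if x % 2 = 1 then 1 else 0 := by
  conv_lhs => rw [← Nat.mod_add_div x 2]
  push_cast
  have h2 : (2 : ZMod 2) = 0 := by decide
  rcases Nat.mod_two_eq_zero_or_one x with h | h <;> simp [h, h2]

lemma pr_apply (e : ZMod (Mod k)) : pr k e = ((e.val : ℕ) : ZMod 2) := by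
  rw [pr, ZMod.castHom_apply, ← ZMod.natCast_val]

lemma matL_mul_invL (l : Letter) : matL k l * matL k (invL l) = 1 := by
  rcases l with ⟨t, d⟩
  rcases t <;> rcases d <;>
    · ext i j
      fin_cases i <;> fin_cases j <;>
        simp [matL, invL, Matrix.mul_apply, Fin.sum_univ_two, Matrix.one_apply]

lemma invL_mul_matL (l : Letter) : matL k (invL l) * matL k l = 1 := by
  rcases l with ⟨t, d⟩
  rcases t <;> rcases d <;>
    · ext i j
      fin_cases i <;> fin_cases j <;>
        simp [matL, invL, Matrix.mul_apply, Fin.sum_univ_two, Matrix.one_apply]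

lemma prM_matL (l : Letter) : prM k (matL k l) = 1 := by
  rcases l with ⟨t, d⟩
  rcases t <;> rcases d <;>
    · ext i j
      fin_cases i <;> fin_cases j <;>
        simp [matL, prM, RingHom.mapMatrix_apply, Matrix.map_apply, Matrix.one_apply,
          map_one, map_ofNat, map_neg] <;> decide

def actT (l : Letter) : T k ≃ T k where
  toFun P := ⟨matL k l * P.1, by rw [map_mul, prM_matL, P.2, one_mul]⟩
  invFun P := ⟨matL k (invL l) * P.1, by rw [map_mul, prM_matL, P.2, one_mul]⟩
  left_inv P := by
    apply Subtype.ext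
    simp only [← mul_assoc, invL_mul_matL, one_mul]
  right_inv P := by
    apply Subtype.ext
    simp only [← mul_assoc, matL_mul_invL, one_mul]

/-- The explicit bijection with matrices over `ZMod (2^(k-1))`. -/
def equivT : T k ≃ Matrix (Fin 2) (Fin 2) (ZMod (2 ^ (k - 1))) where
  toFun P := fun i j => (((P.1 i j).val / 2 : ℕ) : ZMod (2 ^ (k - 1)))
  invFun A := ⟨fun i j => ((2 * (A i j).val + if i = j then 1 else 0 : ℕ) : ZMod (Mod k)),
    by
      ext i j
      show pr k _ = _
      simp only [pr_apply]
      have h1 : (A i j).val < 2 ^ (k - 1) := (A i j).val_lt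
      have hb : (if i = j then 1 else 0 : ℕ) ≤ 1 := by split <;> omega
      have hval : (((2 * (A i j).val + if i = j then 1 else 0 : ℕ) : ZMod (Mod k))).val
          = 2 * (A i j).val + (if i = j then 1 else 0) := by
        rw [ZMod.val_natCast, Nat.mod_eq_of_lt]
        simp only [Mod]
        omega
      rw [hval, natCast_zmod2, Matrix.one_apply]
      rcases em (i = j) with h | h <;> simp only [h, if_true, if_false] <;> norm_num <;> omega
    ⟩
  left_inv P := by
    apply Subtype.ext
    funext i j
    show ((2 * ((((P.1 i j).val / 2 : ℕ) : ZMod (2 ^ (k - 1)))).val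
        + if i = j then 1 else 0 : ℕ) : ZMod (Mod k)) = P.1 i j
    have hpar : (P.1 i j).val % 2 = (if i = j then 1 else 0) := by
      have h2 := congrFun (congrFun P.2 i) j
      simp only [prM, RingHom.mapMatrix_apply, Matrix.map_apply, pr_apply,
        natCast_zmod2, Matrix.one_apply] at h2
      rcases em (i = j) with hij | hij
      · simp only [hij, if_pos rfl] at h2 ⊢
        rcases Nat.mod_two_eq_zero_or_one (P.1 j j).val with h | h
        · rw [h] at h2; norm_num at h2
        · exact h
      · simp only [hij, if_neg hij] at h2 ⊢
        rcases Nat.mod_two_eq_zero_or_one (P.1 i j).val with h | h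
        · exact h
        · rw [h] at h2; norm_num at h2
    have hv2 : ((((P.1 i j).val / 2 : ℕ) : ZMod (2 ^ (k - 1)))).val = (P.1 i j).val / 2 := by
      rw [ZMod.val_natCast, Nat.mod_eq_of_lt]
      have := (P.1 i j).val_lt
      simp only [Mod] at this
      omega
    rw [hv2]
    have : 2 * ((P.1 i j).val / 2) + (if i = j then 1 else 0) = (P.1 i j).val := by
      omega
    rw [this, ZMod.natCast_val, ZMod.cast_id]
  right_inv A := by
    funext i j
    show ((((((2 * (A i j).val + if i = j then 1 else 0 : ℕ) : ZMod (Mod k)))).val / 2 : ℕ)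
        : ZMod (2 ^ (k - 1))) = A i j
    have h1 : (A i j).val < 2 ^ (k - 1) := (A i j).val_lt
    have hval : (((2 * (A i j).val + if i = j then 1 else 0 : ℕ) : ZMod (Mod k))).val
        = 2 * (A i j).val + (if i = j then 1 else 0) := by
      rw [ZMod.val_natCast, Nat.mod_eq_of_lt]
      have hb : (if i = j then 1 else 0 : ℕ) ≤ 1 := by split <;> omega
      simp only [Mod]
      omega
    rw [hval]
    have : (2 * (A i j).val + (if i = j then 1 else 0)) / 2 = (A i j).val := by
      rcases em (i = j) with h | h <;> simp [h] <;> omega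
    rw [this, ZMod.natCast_val, ZMod.cast_id]

noncomputable instance : Fintype (T k) := Fintype.ofEquiv _ (equivT k).symm

lemma card_T : Fintype.card (T k) = 2 ^ (4 * (k - 1)) := by
  rw [Fintype.card_congr (equivT k)]
  have : Fintype.card (Matrix (Fin 2) (Fin 2) (ZMod (2 ^ (k - 1)))) =
      Fintype.card (Fin 2 → Fin 2 → ZMod (2 ^ (k - 1))) := rfl
  rw [this, Fintype.card_fun, Fintype.card_fun, ZMod.card, Fintype.card_fin]
  rw [← pow_mul, ← pow_mul]
  ring_nf

end Alg


section Strip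

variable {q : ℕ}

lemma stripNext_val (i : Fin q) :
    (stripNext i).val = if i.val + 1 = q then 0 else i.val + 1 := by
  show (i.val + 1) % q = _
  rcases em (i.val + 1 = q) with h | h
  · simp [h, Nat.mod_self]
  · rw [Nat.mod_eq_of_lt (by have := i.isLt; omega)]
    simp [h]

lemma stripNext_ne (hq : 3 ≤ q) (i : Fin q) : stripNext i ≠ i := by
  intro h
  have h1 := stripNext_val i
  rw [h] at h1
  have := i.isLt
  rcases em (i.val + 1 = q) with h2 | h2 <;> simp [h2] at h1 <;> omega

lemma stripNext_inj {a b : Fin q} (h : stripNext a = stripNext b) : a = b := by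
  have h1 := stripNext_val a
  have h2 := stripNext_val b
  rw [h] at h1
  have ha := a.isLt
  have hb := b.isLt
  apply Fin.ext
  rcases em (a.val + 1 = q) with h3 | h3 <;> rcases em (b.val + 1 = q) with h4 | h4 <;>
    simp [h3, h4] at h1 h2 <;> omega

lemma stripNext_not_both (hq : 3 ≤ q) {a b : Fin q} :
    ¬(b = stripNext a ∧ a = stripNext b) := by
  rintro ⟨h1, h2⟩
  have ha := stripNext_val a
  have hb := stripNext_val b
  rw [← h1] at ha
  rw [← h2] at hb
  have := a.isLt
  have := b.isLt
  rcases em (a.val + 1 = q) with h3 | h3 <;> rcases em (b.val + 1 = q) with h4 | h4 <;>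
    simp [h3, h4] at ha hb <;> omega

lemma stripNext_parity (hq2 : q % 2 = 0) (i : Fin q) :
    ((stripNext i).val + i.val) % 2 = 1 := by
  have h1 := stripNext_val i
  have := i.isLt
  rcases em (i.val + 1 = q) with h2 | h2 <;> simp [h2] at h1 <;> omega

end Strip


section Main

variable {k m q pad : ℕ} (E : Fin m ≃ T k × Fin pad)

noncomputable def permL (l : Letter) : Equiv.Perm (Fin m) :=
  (E.trans ((actT k l).prodCongr (Equiv.refl (Fin pad)))).trans E.symm

lemma permL_apply (l : Letter) (a : Fin m) :
    permL E l a = E.symm ((actT k l) (E a).1, (E a).2) := by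
  simp [permL, Equiv.prodCongr_apply, Prod.map]

lemma E_permL_fst (l : Letter) (a : Fin m) :
    ((E (permL E l a)).1).1 = matL k l * ((E a).1).1 := by
  rw [permL_apply, Equiv.apply_symm_apply]
  rfl

lemma E_permL_snd (l : Letter) (a : Fin m) : (E (permL E l a)).2 = (E a).2 := by
  rw [permL_apply, Equiv.apply_symm_apply]

lemma actT_cancel (l : Letter) (P : T k) : actT k (invL l) (actT k l P) = P := by
  apply Subtype.ext
  show matL k (invL l) * (matL k l * P.1) = P.1
  rw [← mul_assoc, invL_mul_matL, one_mul]

lemma actT_cancel' (l : Letter) (P : T k) : actT k l (actT k (invL l) P) = P := by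
  apply Subtype.ext
  show matL k l * (matL k (invL l) * P.1) = P.1
  rw [← mul_assoc, matL_mul_invL, one_mul]

lemma permL_cancel (l : Letter) (a : Fin m) : permL E (invL l) (permL E l a) = a := by
  rw [permL_apply, permL_apply, Equiv.apply_symm_apply]
  simp [actT_cancel]

lemma permL_cancel' (l : Letter) (a : Fin m) : permL E l (permL E (invL l) a) = a := by
  rw [permL_apply, permL_apply, Equiv.apply_symm_apply]
  simp [actT_cancel']

/-- The double strip graph built from the two basic letters. -/
noncomputable def GG : SimpleGraph (Fin q × Fin m) :=
  doubleStripGraph m q (fun _ => permL E (false, false)) (fun _ => permL E (true, false))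

lemma GG_adj {a b : Fin q × Fin m} : (GG E).Adj a b ↔ a ≠ b ∧
    ((b.1 = stripNext a.1 ∧ (b.2 = permL E (false,false) a.2 ∨ b.2 = permL E (true,false) a.2)) ∨
     (a.1 = stripNext b.1 ∧ (a.2 = permL E (false,false) b.2 ∨ a.2 = permL E (true,false) b.2))) := by
  rw [GG, doubleStripGraph, SimpleGraph.fromRel_adj]

/-- A step of the walk realises the letter `l`. -/
def Step (l : Letter) (a b : Fin q × Fin m) : Prop :=
  (if l.2 then a.1 = stripNext b.1 else b.1 = stripNext a.1) ∧ b.2 = permL E l a.2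

noncomputable def classify (a b : Fin q × Fin m) : Letter :=
  (if b.1 = stripNext a.1 then (if b.2 = permL E (false,false) a.2 then false else true)
   else (if a.2 = permL E (false,false) b.2 then false else true),
   if b.1 = stripNext a.1 then false else true)

lemma classify_step (hq3 : 3 ≤ q) {a b : Fin q × Fin m} (h : (GG E).Adj a b) :
    Step E (classify E a b) a b := by
  rw [GG_adj] at h
  obtain ⟨-, h⟩ := h
  rcases em (b.1 = stripNext a.1) with hdir | hdir
  · have hrel : b.2 = permL E (false,false) a.2 ∨ b.2 = permL E (true,false) a.2 := by
      rcases h with ⟨_, h2⟩ | ⟨h1, _⟩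
      · exact h2
      · exact absurd ⟨hdir, h1⟩ (stripNext_not_both hq3)
    rcases em (b.2 = permL E (false,false) a.2) with hs | hs
    · constructor
      · simp [classify, hdir]
      · simpa [classify, hdir, hs] using hs
    · have hu : b.2 = permL E (true,false) a.2 := hrel.resolve_left hs
      constructor
      · simp [classify, hdir]
      · simpa [classify, hdir, hs] using hu
  · have hrel : a.1 = stripNext b.1 ∧
        (a.2 = permL E (false,false) b.2 ∨ a.2 = permL E (true,false) b.2) := by
      rcases h with ⟨h1, _⟩ | ⟨h1, h2⟩
      · exact absurd h1 hdir
      · exact ⟨h1, h2⟩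
    rcases em (a.2 = permL E (false,false) b.2) with hs | hs
    · constructor
      · simp [classify, hdir, hrel.1]
      · have : b.2 = permL E (false,true) a.2 := by
          rw [hs]
          exact (permL_cancel E (false,false) b.2).symm
        simpa [classify, hdir, hs] using this
    · have hu : a.2 = permL E (true,false) b.2 := hrel.2.resolve_left hs
      constructor
      · simp [classify, hdir, hrel.1]
      · have : b.2 = permL E (true,true) a.2 := by
          rw [hu]
          exact (permL_cancel E (true,false) b.2).symm
        simpa [classify, hdir, hs] using this

lemma step_uturn {l l' : Letter} {a b c : Fin q × Fin m}
    (h1 : Step E l a b) (h2 : Step E l' b c) (ht : l.1 = l'.1) (hd : l.2 ≠ l'.2) : a = c := by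
  obtain ⟨t, d⟩ := l
  obtain ⟨t', d'⟩ := l'
  simp only at ht hd
  subst ht
  obtain ⟨h1a, h1b⟩ := h1
  obtain ⟨h2a, h2b⟩ := h2
  rcases hdd : d with _ | _ <;> rcases hdd' : d' with _ | _ <;> subst hdd hdd' <;>
      simp only [if_true, if_false, Bool.false_eq_true] at h1a h2a hd
  · exact absurd rfl hd
  ·
    have hfst : a.1 = c.1 := stripNext_inj (by rw [← h1a, ← h2a])
    have hsnd : c.2 = a.2 := by
      rw [h2b, h1b]
      exact permL_cancel E (t,false) a.2
    exact Prod.ext hfst hsnd.symm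
  · have hfst : a.1 = c.1 := by rw [h1a, h2a]
    have hsnd : c.2 = a.2 := by
      rw [h2b, h1b]
      exact permL_cancel' E (t,false) a.2
    exact Prod.ext hfst hsnd.symm
  · exact absurd rfl hd

lemma GG_adj_parity (hq2 : q % 2 = 0) {a b : Fin q × Fin m} (h : (GG E).Adj a b) :
    (a.1.val + b.1.val) % 2 = 1 := by
  rw [GG_adj] at h
  rcases h.2 with ⟨h1, -⟩ | ⟨h1, -⟩
  · have := stripNext_parity hq2 a.1
    rw [← h1] at this
    omega
  · have := stripNext_parity hq2 b.1
    rw [← h1] at this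
    omega

lemma walk_parity (hq2 : q % 2 = 0) :
    ∀ {x y : Fin q × Fin m} (w : (GG E).Walk x y),
      (w.length + x.1.val + y.1.val) % 2 = 0 := by
  intro x y w
  induction w with
  | nil => simp only [SimpleGraph.Walk.length_nil]; omega
  | @cons a b c h p ih =>
    have hadj := GG_adj_parity E hq2 h
    simp only [SimpleGraph.Walk.length_cons]
    omega

lemma getVert_eq_support_getElem {x y : Fin q × Fin m} (w : (GG E).Walk x y) :
    ∀ {i : ℕ} (hi : i ≤ w.length),
      w.getVert i = w.support[i]'(by rw [SimpleGraph.Walk.length_support]; omega) := by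
  induction w with
  | nil =>
    intro i hi
    simp only [SimpleGraph.Walk.length_nil, Nat.le_zero] at hi
    subst hi
    simp
  | @cons a b c h p ih =>
    intro i hi
    rcases i with _ | i
    · simp
    · simp only [SimpleGraph.Walk.length_cons] at hi
      rw [SimpleGraph.Walk.getVert_cons_succ]
      simp only [SimpleGraph.Walk.support_cons, List.getElem_cons_succ]
      exact ih (by omega)

lemma cycle_getVert_inj {x : Fin q × Fin m} {w : (GG E).Walk x x} (hcyc : w.IsCycle)
    {i j : ℕ} (hi1 : 1 ≤ i) (hi2 : i ≤ w.length) (hj1 : 1 ≤ j) (hj2 : j ≤ w.length)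
    (he : w.getVert i = w.getVert j) : i = j := by
  have hnd : w.support.tail.Nodup := hcyc.2
  have hlen : w.support.tail.length = w.length := by
    have h1 := SimpleGraph.Walk.length_support w
    rw [SimpleGraph.Walk.support_eq_cons w] at h1
    simpa using h1
  obtain ⟨i', rfl⟩ : ∃ i', i = i' + 1 := ⟨i - 1, by omega⟩
  obtain ⟨j', rfl⟩ : ∃ j', j = j' + 1 := ⟨j - 1, by omega⟩
  have hgi : w.getVert (i' + 1) = w.support.tail[i']'(by omega) := by
    rw [getVert_eq_support_getElem E w hi2, List.getElem_tail]
  have hgj : w.getVert (j' + 1) = w.support.tail[j']'(by omega) := by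
    rw [getVert_eq_support_getElem E w hj2, List.getElem_tail]
  rw [hgi, hgj] at he
  have := (hnd.getElem_inj_iff).mp he
  omega

noncomputable def apsF (L : List Letter) (a : Fin m) : Fin m :=
  L.foldl (fun a l => permL E l a) a

@[simp] lemma apsF_nil (a : Fin m) : apsF E [] a = a := rfl

lemma apsF_append (L1 L2 : List Letter) (a : Fin m) :
    apsF E (L1 ++ L2) a = apsF E L2 (apsF E L1 a) := List.foldl_append

@[simp] lemma apsF_cons (l : Letter) (L : List Letter) (a : Fin m) :
    apsF E (l :: L) a = apsF E L (permL E l a) := rfl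

end Main

noncomputable def bigP (k : ℕ) (L : List Letter) : MM k := ((L.map (matL k)).reverse).prod

@[simp] lemma bigP_nil (k : ℕ) : bigP k [] = 1 := rfl

lemma bigP_cons (k : ℕ) (l : Letter) (L : List Letter) :
    bigP k (l :: L) = bigP k L * matL k l := by
  simp [bigP, List.reverse_cons]

section Main2

variable {k m q pad : ℕ} (E : Fin m ≃ T k × Fin pad)

lemma E_apsF (L : List Letter) (a : Fin m) :
    ((E (apsF E L a)).1).1 = bigP k L * ((E a).1).1 := by
  induction L generalizing a with
  | nil => simp
  | cons l L ih =>
    rw [apsF_cons, ih (permL E l a), E_permL_fst, bigP_cons, mul_assoc]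

def castPair (k : ℕ) (v : ℤ × ℤ) : Fin 2 → ZMod (Mod k) :=
  ![((v.1 : ℤ) : ZMod (Mod k)), ((v.2 : ℤ) : ZMod (Mod k))]

lemma matL_mulVec (l : Letter) (v : ℤ × ℤ) :
    (matL k l).mulVec (castPair k v) = castPair k (appZ l v) := by
  obtain ⟨x, y⟩ := v
  rcases l with ⟨t, d⟩
  rcases t <;> rcases d <;>
    · funext i
      fin_cases i <;>
        simp [matL, castPair, Matrix.mulVec, dotProduct, Fin.sum_univ_two, appZ, sgn] <;>
        (push_cast; ring)

lemma bigP_mulVec (L : List Letter) (v : ℤ × ℤ) :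
    (bigP k L).mulVec (castPair k v) = castPair k (foldZ L v) := by
  induction L generalizing v with
  | nil => simp [Matrix.one_mulVec]
  | cons l L ih =>
    rw [bigP_cons, ← Matrix.mulVec_mulVec, matL_mulVec, ih (appZ l v), foldZ_cons]

lemma T_isUnit (P : T k) : IsUnit (P.1) := by
  rw [Matrix.isUnit_iff_isUnit_det]
  have hdet : pr k (P.1.det) = 1 := by
    have h1 : (pr k) P.1.det = ((pr k).mapMatrix P.1).det := RingHom.map_det _ _
    rw [h1, show (pr k).mapMatrix P.1 = prM k P.1 from rfl, P.2, Matrix.det_one]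
  rw [pr_apply, natCast_zmod2] at hdet
  have hodd : (P.1.det).val % 2 = 1 := by
    rcases Nat.mod_two_eq_zero_or_one (P.1.det).val with h | h
    · rw [h] at hdet; norm_num at hdet
    · exact h
  have h2 : Nat.Coprime 2 (P.1.det).val := by
    rw [Nat.Prime.coprime_iff_not_dvd Nat.prime_two]
    omega
  have hcop : Nat.Coprime (P.1.det).val (Mod k) := by
    have ha : Nat.Coprime (P.1.det).val 2 := h2.symm
    have hb : Nat.Coprime (P.1.det).val (2 ^ (k - 1)) := ha.pow_right _
    exact ha.mul_right hb
  have hu := (ZMod.isUnit_iff_coprime (P.1.det).val (Mod k)).mpr hcop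
  rwa [ZMod.natCast_val, ZMod.cast_id] at hu

lemma bigP_eq_one {L : List Letter} {P : T k} (h : bigP k L * P.1 = P.1) : bigP k L = 1 := by
  obtain ⟨u, hu⟩ := T_isUnit P
  rw [← hu] at h
  calc bigP k L = bigP k L * ↑u * ↑u⁻¹ := by rw [mul_assoc, Units.mul_inv, mul_one]
    _ = ↑u * ↑u⁻¹ := by rw [h]
    _ = 1 := Units.mul_inv u

lemma no_short_cycle (hq3 : 3 ≤ q) {x : Fin q × Fin m} (w : (GG E).Walk x x)
    (hcyc : w.IsCycle) (hpow : 3 ^ w.length < ((Mod k : ℕ) : ℤ)) : False := by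
  have hn3 : 3 ≤ w.length := hcyc.three_le_length
  classical
  set f : ℕ → Letter := fun t => classify E (w.getVert t) (w.getVert (t+1)) with hf
  set L : List Letter := (List.range w.length).map f with hL
  have hlenL : L.length = w.length := by simp [hL]
  have hstep : ∀ t, t < w.length → Step E (f t) (w.getVert t) (w.getVert (t+1)) := by
    intro t ht
    exact classify_step E hq3 (w.adj_getVert_succ ht)
  have haps : ∀ t, t ≤ w.length → apsF E ((List.range t).map f) x.2 = (w.getVert t).2 := by
    intro t
    induction t with
    | zero =>
      intro _
      simp [SimpleGraph.Walk.getVert_zero]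
    | succ t ih =>
      intro ht
      rw [List.range_succ, List.map_append, apsF_append]
      simp only [List.map_cons, List.map_nil]
      rw [ih (by omega)]
      have h2 := (hstep t (by omega)).2
      rw [apsF_cons, apsF_nil, ← h2]
  have hfix : apsF E L x.2 = x.2 := by
    have h1 := haps w.length le_rfl
    rw [SimpleGraph.Walk.getVert_length] at h1
    exact h1
  have hchain : List.Chain' compat L := by
    rw [hL, List.Chain', List.isChain_map]
    obtain ⟨n', hn'⟩ : ∃ n', w.length = n' + 1 := ⟨w.length - 1, by omega⟩
    rw [hn']
    rw [List.isChain_range_succ]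
    intro t ht
    intro hty
    by_contra hdir
    have h1 := hstep t (by omega)
    have h2 := hstep (t+1) (by omega)
    have heq : w.getVert t = w.getVert (t+2) := step_uturn E h1 h2 hty hdir
    rcases Nat.eq_zero_or_pos t with rfl | htpos
    · have hx0 : w.getVert 0 = x := w.getVert_zero
      have hxn : w.getVert w.length = x := w.getVert_length
      have h02 : w.getVert w.length = w.getVert 2 := by rw [hxn, ← heq, hx0]
      have := cycle_getVert_inj E hcyc (by omega) (le_rfl) (by omega) (by omega) h02
      omega
    · have := cycle_getVert_inj E hcyc (by omega : 1 ≤ t) (by omega) (by omega : 1 ≤ t + 2)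
        (by omega) heq
      omega
  have hmat : bigP k L = 1 := by
    apply bigP_eq_one (P := (E x.2).1)
    have h1 := E_apsF E L x.2
    rw [hfix] at h1
    exact h1.symm
  -- now the integer ping-pong
  obtain ⟨l0, L', hL'⟩ : ∃ l0 L', L = l0 :: L' := by
    rcases hLc : L with _ | ⟨l0, L'⟩
    · rw [hLc] at hlenL; simp at hlenL; omega
    · exact ⟨l0, L', rfl⟩
  have hlst : ∀ v0 : ℤ × ℤ, (v0 = (0,1) ∨ v0 = (1,0)) →
      INV (L'.getLastD l0) (foldZ L v0) := by
    intro v0 hv0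
    have hbase : INV l0 (appZ l0 v0) := inv_base l0 hv0
    have hchain' : List.Chain' compat (l0 :: L') := by rw [← hL']; exact hchain
    have := foldZ_inv L' l0 (appZ l0 v0) hbase hchain'
    rw [hL']
    exact this
  set lst := L'.getLastD l0 with hlstdef
  set v0 : ℤ × ℤ := if lst.1 then (1,0) else (0,1) with hv0def
  have hv0mem : v0 = (0,1) ∨ v0 = (1,0) := by
    rcases h : lst.1 <;> simp [hv0def, h]
  have hinv : INV lst (foldZ L v0) := hlst v0 hv0mem
  have hgrow := foldZ_growth L v0
  have hv0sum : |v0.1| + |v0.2| = 1 := by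
    rcases h : lst.1 <;> simp [hv0def, h]
  rw [hv0sum, mul_one, hlenL] at hgrow
  have hcast : castPair k (foldZ L v0) = castPair k v0 := by
    rw [← bigP_mulVec, hmat, Matrix.one_mulVec]
  have hc1 : (((foldZ L v0).1 : ℤ) : ZMod (Mod k)) = ((v0.1 : ℤ) : ZMod (Mod k)) := by
    have := congrFun hcast 0
    simpa [castPair] using this
  have hc2 : (((foldZ L v0).2 : ℤ) : ZMod (Mod k)) = ((v0.2 : ℤ) : ZMod (Mod k)) := by
    have := congrFun hcast 1
    simpa [castPair] using this
  have hdvd1 : ((Mod k : ℕ) : ℤ) ∣ (v0.1 - (foldZ L v0).1) :=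
    ((ZMod.intCast_eq_intCast_iff _ _ _).mp hc1).dvd
  have hdvd2 : ((Mod k : ℕ) : ℤ) ∣ (v0.2 - (foldZ L v0).2) :=
    ((ZMod.intCast_eq_intCast_iff _ _ _).mp hc2).dvd
  have habs1 := abs_nonneg (foldZ L v0).1
  have habs2 := abs_nonneg (foldZ L v0).2
  unfold INV at hinv
  rcases h : lst.1 with _ | _ <;> rw [h] at hinv <;>
    simp only [if_true, if_false, Bool.false_eq_true] at hinv
  · -- lst S-type: v0 = (0,1), so first coordinate of foldZ is ≡ 0 and small
    have hveq : v0 = ((0 : ℤ), (1 : ℤ)) := by rw [hv0def, h]; simp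
    rw [hveq] at hdvd1 hgrow hinv
    simp only [Prod.fst, Prod.snd] at hdvd1
    have hdvd1' : ((Mod k : ℕ) : ℤ) ∣ (foldZ L (0, 1)).1 := by
      have : (0 : ℤ) - (foldZ L ((0 : ℤ), (1 : ℤ))).1 = -(foldZ L ((0 : ℤ), (1 : ℤ))).1 := by ring
      rw [this, dvd_neg] at hdvd1
      exact hdvd1
    have habs1' := abs_nonneg (foldZ L ((0 : ℤ), (1 : ℤ))).1
    have habs2' := abs_nonneg (foldZ L ((0 : ℤ), (1 : ℤ))).2
    have hz : (foldZ L ((0 : ℤ), (1 : ℤ))).1 = 0 := by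
      apply Int.eq_zero_of_abs_lt_dvd hdvd1'
      omega
    rw [hz] at hinv
    simp at hinv
    omega
  · have hveq : v0 = ((1 : ℤ), (0 : ℤ)) := by rw [hv0def, h]; simp
    rw [hveq] at hdvd2 hgrow hinv
    simp only [Prod.fst, Prod.snd] at hdvd2
    have hdvd2' : ((Mod k : ℕ) : ℤ) ∣ (foldZ L (1, 0)).2 := by
      have : (0 : ℤ) - (foldZ L ((1 : ℤ), (0 : ℤ))).2 = -(foldZ L ((1 : ℤ), (0 : ℤ))).2 := by ring
      rw [this, dvd_neg] at hdvd2
      exact hdvd2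
    have habs1' := abs_nonneg (foldZ L ((1 : ℤ), (0 : ℤ))).1
    have habs2' := abs_nonneg (foldZ L ((1 : ℤ), (0 : ℤ))).2
    have hz : (foldZ L ((1 : ℤ), (0 : ℤ))).2 = 0 := by
      apply Int.eq_zero_of_abs_lt_dvd hdvd2'
      omega
    rw [hz] at hinv
    simp at hinv
    omega

end Main2

section CycleExists

variable {m q : ℕ} (s u : Equiv.Perm (Fin m))

/-- The same graph, from two fixed permutations. -/
noncomputable def GG2 : SimpleGraph (Fin q × Fin m) :=
  doubleStripGraph m q (fun _ => s) (fun _ => u)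

lemma GG2_adj {a b : Fin q × Fin m} : (GG2 s u).Adj a b ↔ a ≠ b ∧
    ((b.1 = stripNext a.1 ∧ (b.2 = s a.2 ∨ b.2 = u a.2)) ∨
     (a.1 = stripNext b.1 ∧ (a.2 = s b.2 ∨ a.2 = u b.2))) := by
  rw [GG2, doubleStripGraph, SimpleGraph.fromRel_adj]

/-- one up-step along `s`. -/
def nxt (x : Fin q × Fin m) : Fin q × Fin m := (stripNext x.1, s x.2)

lemma nxt_adj (hq3 : 3 ≤ q) (x : Fin q × Fin m) : (GG2 s u).Adj x (nxt s x) := by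
  rw [GG2_adj]
  refine ⟨?_, Or.inl ⟨rfl, Or.inl rfl⟩⟩
  intro h
  have : x.1 = stripNext x.1 := congrArg Prod.fst h
  exact stripNext_ne hq3 x.1 this.symm

noncomputable def upWalk (hq3 : 3 ≤ q) : (j : ℕ) → (x : Fin q × Fin m) →
    (GG2 s u).Walk x ((nxt s)^[j] x)
  | 0, x => SimpleGraph.Walk.nil.copy rfl (by simp)
  | j+1, x => ((SimpleGraph.Walk.cons (nxt_adj s u hq3 x) (upWalk hq3 j (nxt s x))).copy rfl
      (by rw [Function.iterate_succ_apply]))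

lemma upWalk_length (hq3 : 3 ≤ q) : ∀ (j : ℕ) (x : Fin q × Fin m),
    (upWalk s u hq3 j x).length = j := by
  intro j
  induction j with
  | zero => intro x; simp [upWalk]
  | succ j ih =>
    intro x
    simp [upWalk, ih]

lemma nxt_fst_val {x : Fin q × Fin m} (h : x.1.val + 1 < q) :
    (nxt s x).1.val = x.1.val + 1 := by
  have := stripNext_val x.1
  rw [nxt]
  simp only at this ⊢
  rw [this]
  have : x.1.val + 1 ≠ q := by omega
  simp [this]

lemma upWalk_support_vals (hq3 : 3 ≤ q) : ∀ (j : ℕ) (x : Fin q × Fin m),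
    x.1.val + j < q →
    (upWalk s u hq3 j x).support.map (fun z => z.1.val) = List.range' x.1.val (j+1) 1 := by
  intro j
  induction j with
  | zero =>
    intro x _
    simp [upWalk, List.range'_one]
  | succ j ih =>
    intro x hx
    have h1 : (nxt s x).1.val = x.1.val + 1 := nxt_fst_val s (by omega)
    have h2 := ih (nxt s x) (by omega)
    rw [h1] at h2
    simp only [upWalk, SimpleGraph.Walk.support_copy, SimpleGraph.Walk.support_cons]
    rw [List.map_cons, h2]
    simp [List.range'_succ]

lemma upWalk_darts (hq3 : 3 ≤ q) : ∀ (j : ℕ) (x : Fin q × Fin m),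
    x.1.val + j < q →
    ∀ d ∈ (upWalk s u hq3 j x).darts, d.snd.1.val = d.fst.1.val + 1 := by
  intro j
  induction j with
  | zero =>
    intro x _ d hd
    simp [upWalk] at hd
  | succ j ih =>
    intro x hx d hd
    simp only [upWalk, SimpleGraph.Walk.darts_copy, SimpleGraph.Walk.darts_cons,
      List.mem_cons] at hd
    have h1 : (nxt s x).1.val = x.1.val + 1 := nxt_fst_val s (by omega)
    rcases hd with rfl | hd
    · show (nxt s x).1.val = x.1.val + 1
      exact h1
    · exact ih (nxt s x) (by omega) d hd

lemma iterate_nxt_fst (hq3 : 3 ≤ q) : ∀ (j : ℕ) (x : Fin q × Fin m), x.1.val + j < q →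
    ((nxt s)^[j] x).1.val = x.1.val + j := by
  intro j
  induction j with
  | zero => intro x _; simp
  | succ j ih =>
    intro x hx
    rw [Function.iterate_succ_apply]
    have h1 : (nxt s x).1.val = x.1.val + 1 := nxt_fst_val s (by omega)
    rw [ih (nxt s x) (by omega), h1]
    omega

lemma iterate_nxt_snd : ∀ (j : ℕ) (x : Fin q × Fin m), ((nxt s)^[j] x).2 = (s ^ j) x.2 := by
  intro j
  induction j with
  | zero => intro x; simp
  | succ j ih =>
    intro x
    rw [Function.iterate_succ_apply, ih (nxt s x)]
    rw [pow_succ]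
    simp [nxt]

lemma GG2_not_acyclic (hq3 : 3 ≤ q) (hs : s ^ q = 1) (a : Fin m) :
    ¬ (GG2 (q := q) s u).IsAcyclic := by
  have hq0 : 0 < q := by omega
  set x0 : Fin q × Fin m := (⟨0, hq0⟩, a) with hx0
  set e : Fin q × Fin m := (nxt s)^[q-1] x0 with he
  have hefst : e.1.val = q - 1 := by
    rw [he, iterate_nxt_fst s hq3 (q-1) x0 (by simp [hx0]; omega)]
    simp [hx0]
  have hesnd : e.2 = (s ^ (q-1)) a := by
    rw [he, iterate_nxt_snd s (q-1) x0]
  -- the closing edge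
  have hadj : (GG2 s u).Adj e x0 := by
    rw [GG2_adj]
    constructor
    · intro h
      have h1 : e.1.val = x0.1.val := congrArg (fun z => z.1.val) h
      rw [hefst] at h1
      simp [hx0] at h1
      omega
    · refine Or.inl ⟨?_, Or.inl ?_⟩
      · apply Fin.ext
        rw [stripNext_val, hefst]
        have : q - 1 + 1 = q := by omega
        simp [this, hx0]
      · show a = s e.2
        rw [hesnd]
        have : s ((s ^ (q-1)) a) = (s ^ q) a := by
          rw [show q = (q-1) + 1 by omega, pow_succ']
          simp [Equiv.Perm.mul_apply]
        rw [this, hs]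
        simp
  -- the path
  have hpath : (upWalk s u hq3 (q-1) x0).IsPath := by
    apply SimpleGraph.Walk.IsPath.mk'
    have hvals := upWalk_support_vals s u hq3 (q-1) x0 (by simp [hx0]; omega)
    have hnd : ((upWalk s u hq3 (q-1) x0).support.map (fun z => z.1.val)).Nodup := by
      rw [hvals]
      exact List.nodup_range' _
    exact hnd.of_map _
  have hedge : s(e, x0) ∉ (upWalk s u hq3 (q-1) x0).edges := by
    intro hmem
    rw [SimpleGraph.Walk.edges, List.mem_map] at hmem
    obtain ⟨d, hd, hde⟩ := hmem
    have hdval := upWalk_darts s u hq3 (q-1) x0 (by simp [hx0]; omega) d hd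
    have : d.edge = s(d.fst, d.snd) := rfl
    rw [this] at hde
    rw [Sym2.eq_iff] at hde
    have hx0v : x0.1.val = 0 := by simp [hx0]
    rcases hde with ⟨h1, h2⟩ | ⟨h1, h2⟩
    · rw [h1, h2] at hdval
      rw [hefst, hx0v] at hdval
      omega
    · rw [h1, h2] at hdval
      rw [hefst, hx0v] at hdval
      omega
  intro hacyclic
  exact hacyclic _ ((SimpleGraph.Walk.cons_isCycle_iff _ hadj).mpr ⟨hpath, hedge⟩)

end CycleExists


lemma pow3_lt (K : ℕ) (hK : 3 ≤ K) : 3 ^ (2*K - 2) < 2 ^ (K*K - K + 2) := by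
  induction K, hK using Nat.le_induction with
  | base => norm_num
  | succ K hK ih =>
    have h1 : 2*(K+1) - 2 = (2*K - 2) + 2 := by omega
    have h2 : (K+1)*(K+1) - (K+1) + 2 = (K*K - K + 2) + (2*K) := by
      have hx : (K+1)*(K+1) = K*K + 2*K + 1 := by ring
      have hKK : K ≤ K * K := Nat.le_mul_of_pos_left K (by omega)
      omega
    rw [h1, h2, pow_add, pow_add]
    have h9 : (3:ℕ)^2 ≤ 2^(2*K) := by
      calc (3:ℕ)^2 = 9 := by norm_num
        _ ≤ 2^4 := by norm_num
        _ ≤ 2^(2*K) := Nat.pow_le_pow_right (by norm_num) (by omega)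
    calc 3^(2*K-2) * 3^2 ≤ 3^(2*K-2) * 2^(2*K) := Nat.mul_le_mul_left _ h9
      _ < 2^(K*K-K+2) * 2^(2*K) := Nat.mul_lt_mul_of_pos_right ih (by positivity)

lemma permL_ne {k m pad : ℕ} (hk2 : 2 ≤ k) (E : Fin m ≃ T k × Fin pad) (a : Fin m) :
    permL E (false,false) a ≠ permL E (true,false) a := by
  intro h
  have h1 : ((E (permL E (false,false) a)).1).1 = ((E (permL E (true,false) a)).1).1 := by rw [h]
  rw [E_permL_fst, E_permL_fst] at h1
  obtain ⟨v, hv⟩ := T_isUnit ((E a).1)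
  rw [← hv] at h1
  have h2 : matL k (false,false) = matL k (true,false) := by
    calc matL k (false,false) = matL k (false,false) * ↑v * ↑v⁻¹ := by
          rw [mul_assoc, Units.mul_inv, mul_one]
      _ = matL k (true,false) * ↑v * ↑v⁻¹ := by rw [h1]
      _ = matL k (true,false) := by rw [mul_assoc, Units.mul_inv, mul_one]
  have h3 := congrFun (congrFun h2 0) 1
  simp [matL] at h3
  -- h3 : (2 : ZMod (Mod k)) = 0
  have h4 : 4 ≤ Mod k := by
    have h5 : 2 ≤ 2^(k-1) := by
      calc 2 = 2^1 := rfl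
        _ ≤ 2^(k-1) := Nat.pow_le_pow_right (by norm_num) (by omega)
    show 4 ≤ 2 * 2^(k-1)
    omega
  have hval : ((2 : ℕ) : ZMod (Mod k)).val = 2 := by
    rw [ZMod.val_natCast, Nat.mod_eq_of_lt (by omega)]
  rw [show ((2 : ZMod (Mod k))) = ((2:ℕ) : ZMod (Mod k)) by push_cast; ring] at h3
  rw [h3] at hval
  simp at hval

lemma perm_pow_q {m q : ℕ} (s : Equiv.Perm (Fin m)) (A : ℕ)
    (hq : q = A * Nat.factorial m) : s ^ q = 1 := by
  subst hq
  rw [mul_comm, pow_mul]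
  have h1 : s ^ (Nat.factorial m) = 1 := by
    have h2 := pow_card_eq_one (x := s)
    rwa [Fintype.card_perm, Fintype.card_fin] at h2
  rw [h1, one_pow]

end DStrip

lemma DStrip.cyclical_const {m q : ℕ} (s : Equiv.Perm (Fin m)) (A : ℕ)
    (hq : q = A * Nat.factorial m) : IsCyclicalStrip (fun _ : Fin q => s) := by
  show (List.ofFn fun _ : Fin q => s).reverse.prod = 1
  rw [List.ofFn_const, List.reverse_replicate, List.prod_replicate]
  exact DStrip.perm_pow_q s A hq

/-- Double-strips of large girth exist. -/
theorem double_strip_of_large_girth (K' r : ℕ) (hK' : 1 ≤ K') (hr : 1 ≤ r) :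
    ∀ m q : ℕ, m = 2 ^ (2 * K' * (2 * K' - 1)) →
      q = 2 ^ (2 * K' - 1) * r * Nat.factorial m →
      ∃ σ τ : Fin q → Equiv.Perm (Fin m),
        IsCyclicalStrip σ ∧ IsCyclicalStrip τ ∧
        (∀ (i : Fin q) (a : Fin m), σ i a ≠ τ i a) ∧
        ((2 * K' : ℕ) : ℕ∞) ≤ (doubleStripGraph m q σ τ).girth := by
  intro m q hm hq
  classical
  have hexp2 : 2 ≤ 2 * K' * (2 * K' - 1) := by
    have h1 : 1 ≤ 2 * K' - 1 := by omega
    calc 2 ≤ 2 * K' := by omega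
      _ = 2 * K' * 1 := by ring
      _ ≤ 2 * K' * (2 * K' - 1) := Nat.mul_le_mul_left _ h1
  have hm2 : 2 ≤ m := by
    rw [hm]
    calc 2 = 2^1 := rfl
      _ ≤ 2 ^ (2 * K' * (2 * K' - 1)) := Nat.pow_le_pow_right (by norm_num) (by omega)
  have hmfact : 2 ≤ Nat.factorial m := le_trans hm2 (Nat.self_le_factorial m)
  have hq3 : 3 ≤ q := by
    rw [hq]
    have h1 : 2 ≤ 2^(2*K'-1) := by
      calc 2 = 2^1 := rfl
        _ ≤ 2^(2*K'-1) := Nat.pow_le_pow_right (by norm_num) (by omega)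
    calc 3 ≤ 2*1*2 := by norm_num
      _ ≤ 2^(2*K'-1) * r * Nat.factorial m := Nat.mul_le_mul (Nat.mul_le_mul h1 hr) hmfact
  have hq2 : q % 2 = 0 := by
    obtain ⟨j, hj⟩ : ∃ j, 2*K' - 1 = j + 1 := ⟨2*K' - 2, by omega⟩
    have h1 : q = 2 * (2^j * r * Nat.factorial m) := by
      rw [hq, hj, pow_succ]; ring
    omega
  rcases Nat.lt_or_ge K' 2 with hK1 | hK2
  · -- K' = 1 : trivial girth bound 2
    have hK'1 : K' = 1 := by omega
    haveI : NeZero m := ⟨by omega⟩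
    refine ⟨fun _ => 1, fun _ => Equiv.addLeft (1 : Fin m), ?_, ?_, ?_, ?_⟩
    · exact DStrip.cyclical_const _ (2 ^ (2 * K' - 1) * r) hq
    · exact DStrip.cyclical_const _ (2 ^ (2 * K' - 1) * r) hq
    · intro i a
      show (a : Fin m) ≠ 1 + a
      intro h
      have h1 : (0 : Fin m) + a = 1 + a := by rw [zero_add]; exact h
      have h2 : (0 : Fin m) = 1 := add_right_cancel h1
      have h3 := congrArg Fin.val h2
      rw [Fin.val_zero, Fin.val_one'] at h3
      rw [Nat.mod_eq_of_lt (by omega)] at h3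
      omega
    · -- girth ≥ 2
      have hone : (1 : Equiv.Perm (Fin m)) ^ q = 1 := one_pow q
      have hnot := DStrip.GG2_not_acyclic (q := q) 1 (Equiv.addLeft (1 : Fin m)) hq3 hone
        ⟨0, by omega⟩
      have hG : doubleStripGraph m q (fun _ => 1) (fun _ => Equiv.addLeft (1 : Fin m))
          = DStrip.GG2 (q := q) 1 (Equiv.addLeft (1 : Fin m)) := rfl
      rw [hG]
      obtain ⟨v0, w0, hw0, hegirth⟩ := (SimpleGraph.exists_egirth_eq_length).mpr hnot
      have h3 : 3 ≤ w0.length := hw0.three_le_length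
      have hgirth : (DStrip.GG2 (q := q) 1 (Equiv.addLeft (1 : Fin m))).girth = w0.length := by
        rw [SimpleGraph.girth, hegirth, ENat.toNat_coe]
      rw [hgirth]
      have : 2 * K' ≤ w0.length := by omega
      exact_mod_cast this
  · -- main construction, K' ≥ 2
    obtain ⟨KK, hKK⟩ : ∃ KK, K' * K' = KK := ⟨_, rfl⟩
    have hKle : K' ≤ KK := by rw [← hKK]; exact Nat.le_mul_of_pos_left K' (by omega)
    set k : ℕ := KK - K' + K'/2 + 1 with hk
    have hk2 : 2 ≤ k := by omega
    have hM0 : 2 * K' * (2 * K' - 1) = 4 * KK - 2 * K' := by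
      obtain ⟨s, hs⟩ : ∃ s, K' = s + 1 := ⟨K' - 1, by omega⟩
      subst hs
      have e1 : (s+1) * (s+1) = s*s + 2*s + 1 := by ring
      have e2 : 2*(s+1) * (2*(s+1) - 1) = 4*(s*s) + 6*s + 2 := by
        have : 2*(s+1) - 1 = 2*s + 1 := by omega
        rw [this]; ring
      omega
    have h4k : 4 * (k - 1) ≤ 2 * K' * (2 * K' - 1) := by
      rw [hM0]
      omega
    set pad : ℕ := 2 ^ (2 * K' * (2 * K' - 1) - 4 * (k - 1)) with hpad
    have hcard : Fintype.card (DStrip.T k × Fin pad) = m := by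
      rw [Fintype.card_prod, DStrip.card_T, Fintype.card_fin, hpad, hm, ← pow_add]
      congr 1
      omega
    set E : Fin m ≃ DStrip.T k × Fin pad := (Fintype.equivFinOfCardEq hcard).symm with hE
    set s : Equiv.Perm (Fin m) := DStrip.permL E (false, false) with hs
    set u : Equiv.Perm (Fin m) := DStrip.permL E (true, false) with hu
    refine ⟨fun _ => s, fun _ => u, ?_, ?_, ?_, ?_⟩
    · exact DStrip.cyclical_const _ (2 ^ (2 * K' - 1) * r) hq
    · exact DStrip.cyclical_const _ (2 ^ (2 * K' - 1) * r) hq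
    · intro i a
      exact DStrip.permL_ne hk2 E a
    · -- the girth bound
      have hG : doubleStripGraph m q (fun _ : Fin q => s) (fun _ : Fin q => u)
          = DStrip.GG (q := q) E := rfl
      rw [hG]
      -- every cycle is long
      have hModk : DStrip.Mod k = 2 ^ k := by
        show 2 * 2^(k-1) = 2^k
        rw [show k = (k-1) + 1 by omega, pow_succ]
        simp
        ring
      have hcyclen : ∀ (x : Fin q × Fin m) (w : (DStrip.GG (q := q) E).Walk x x),
          w.IsCycle → 2 * K' ≤ w.length := by
        intro x w hcyc
        by_contra hlen
        push_neg at hlen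
        have hn3 : 3 ≤ w.length := hcyc.three_le_length
        have heven : w.length % 2 = 0 := by
          have := DStrip.walk_parity E hq2 w
          omega
        have h4 : 4 ≤ w.length := by omega
        have hK3 : 3 ≤ K' := by omega
        have hpow : 3 ^ w.length < ((DStrip.Mod k : ℕ) : ℤ) := by
          have h1 : (3:ℕ) ^ w.length ≤ 3 ^ (2*K' - 2) :=
            Nat.pow_le_pow_right (by norm_num) (by omega)
          have h2 : (3:ℕ) ^ (2*K' - 2) < 2 ^ (K'*K' - K' + 2) := DStrip.pow3_lt K' hK3
          have h3 : (2:ℕ) ^ (K'*K' - K' + 2) ≤ 2 ^ k := by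
            apply Nat.pow_le_pow_right (by norm_num)
            omega
          have h5 : (3:ℕ) ^ w.length < DStrip.Mod k := by
            rw [hModk]; omega
          exact_mod_cast h5
        exact DStrip.no_short_cycle E hq3 w hcyc hpow
      -- the graph has a cycle
      have hsq : s ^ q = 1 := DStrip.perm_pow_q s (2 ^ (2 * K' - 1) * r) hq
      have hnot : ¬ (DStrip.GG (q := q) E).IsAcyclic := by
        have h1 := DStrip.GG2_not_acyclic (q := q) s u hq3 hsq ⟨0, by omega⟩
        have h2 : DStrip.GG (q := q) E = DStrip.GG2 (q := q) s u := rfl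
        rw [h2]
        exact h1
      obtain ⟨v0, w0, hw0, hegirth⟩ := (SimpleGraph.exists_egirth_eq_length).mpr hnot
      have hgirth : (DStrip.GG (q := q) E).girth = w0.length := by
        rw [SimpleGraph.girth, hegirth, ENat.toNat_coe]
      rw [hgirth]
      exact_mod_cast hcyclen v0 w0 hw0
end
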